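/- arXiv:1201.0609 — 6 statements merged into one kernel-verified Lean document; each statement's English description precedes it below -/
import Mathlib

section
/- Let s ∈ ℂ with |s| < 1 and define φ_s : ℕ → ℂ by φ_s(n) = sⁿ. Then φ_s belongs to the class 𝒞 and ‖φ_s‖_𝒞 = |1−s|/(1−|s|). -/
open MeasureTheory Filter
open scoped ENNReal NNReal

noncomputable section

/-- The Hilbert space `ℓ²(ℕ; ℂ)`. -/
abbrev ell2 : Type := lp (fun _ : ℕ => ℂ) 2

/-- A matrix `h : ℕ → ℕ → ℂ` is of trace class if it admits a representation
`h i j = ∑ₖ xₖ(i) · conj (yₖ(j))` with `xₖ, yₖ ∈ ℓ²(ℕ; ℂ)` and `∑ₖ ‖xₖ‖₂·‖yₖ‖₂ < ∞`. -/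
def IsTraceClass (h : ℕ → ℕ → ℂ) : Prop :=
  ∃ x y : ℕ → ell2,
    (Summable fun k => ‖x k‖ * ‖y k‖) ∧
    ∀ i j, h i j = ∑' k, (x k : ℕ → ℂ) i * (starRingEnd ℂ) ((y k : ℕ → ℂ) j)

/-- The trace norm of a matrix: the infimum of `∑ₖ ‖xₖ‖₂·‖yₖ‖₂` over all representations
`h i j = ∑ₖ xₖ(i) · conj (yₖ(j))` as above. -/
def traceNorm (h : ℕ → ℕ → ℂ) : ℝ :=
  sInf { c : ℝ | ∃ x y : ℕ → ell2,
    (Summable fun k => ‖x k‖ * ‖y k‖) ∧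
    (∀ i j, h i j = ∑' k, (x k : ℕ → ℂ) i * (starRingEnd ℂ) ((y k : ℕ → ℂ) j)) ∧
    c = ∑' k, ‖x k‖ * ‖y k‖ }

/-- The Hankel matrix `h_φ(i,j) = φ(i+j) − φ(i+j+1)`. -/
def hankelH (φ : ℕ → ℂ) : ℕ → ℕ → ℂ := fun i j => φ (i+j) - φ (i+j+1)

/-- The Hankel matrix `k_φ(i,j) = φ(i+j+1) − φ(i+j+2)`. -/
def hankelK (φ : ℕ → ℂ) : ℕ → ℕ → ℂ := fun i j => φ (i+j+1) - φ (i+j+2)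

/-- The class `𝒞`: both Hankel matrices `h_φ` and `k_φ` are of trace class. -/
def MemC (φ : ℕ → ℂ) : Prop := IsTraceClass (hankelH φ) ∧ IsTraceClass (hankelK φ)

/-- The norm `‖φ‖_𝒞 = ‖h_φ‖₁ + ‖k_φ‖₁ + |c|`, where `c = lim_{n→∞} φ(n)`
(expressed via `limUnder`, which gives the limit whenever it exists). -/
def CNorm (φ : ℕ → ℂ) : ℝ :=
  traceNorm (hankelH φ) + traceNorm (hankelK φ) + ‖limUnder atTop φ‖

abbrev rell2 : Type := lp (fun _ : ℕ => ℝ) 2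

lemma two_toReal : (2 : ℝ≥0∞).toReal = ((2:ℕ):ℝ) := by norm_num

lemma ell2_norm_sq (f : ell2) : ‖f‖ ^ 2 = ∑' i, ‖(f : ℕ → ℂ) i‖ ^ 2 := by
  have h := lp.norm_rpow_eq_tsum (p := 2) (by norm_num) f
  rw [two_toReal] at h
  simpa [Real.rpow_natCast] using h

def absVec (u : ell2) : rell2 :=
  ⟨fun i => ‖(u : ℕ → ℂ) i‖, by
    apply memℓp_gen
    have hs := (lp.memℓp u).summable (p := 2) (by norm_num)
    simpa using hs⟩

lemma absVec_apply (u : ell2) (i : ℕ) : (absVec u : ℕ → ℝ) i = ‖(u : ℕ → ℂ) i‖ := rfl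

lemma rell2_norm_sq (f : rell2) : ‖f‖ ^ 2 = ∑' i, ‖(f : ℕ → ℝ) i‖ ^ 2 := by
  have h := lp.norm_rpow_eq_tsum (p := 2) (by norm_num) f
  rw [two_toReal] at h
  simpa [Real.rpow_natCast] using h

lemma absVec_norm (u : ell2) : ‖absVec u‖ = ‖u‖ := by
  have he : ‖absVec u‖ ^ 2 = ‖u‖ ^ 2 := by
    rw [rell2_norm_sq, ell2_norm_sq]
    congr 1; funext i; rw [absVec_apply, norm_norm]
  nlinarith [norm_nonneg (absVec u), norm_nonneg u]

/-- Cauchy–Schwarz for the pointwise absolute pairing of two `ℓ²` vectors. -/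
lemma abs_pairing_summable (u v : ell2) :
    Summable fun i => ‖(u : ℕ → ℂ) i‖ * ‖(v : ℕ → ℂ) i‖ := by
  have h := lp.summable_inner (𝕜 := ℝ) (absVec v) (absVec u)
  simpa [RCLike.inner_apply, starRingEnd_apply, absVec_apply] using h

lemma abs_pairing_le (u v : ell2) :
    ∑' i, ‖(u : ℕ → ℂ) i‖ * ‖(v : ℕ → ℂ) i‖ ≤ ‖u‖ * ‖v‖ := by
  have h := real_inner_le_norm (absVec u) (absVec v)
  rw [absVec_norm, absVec_norm] at h
  have : (inner ℝ (absVec u) (absVec v) : ℝ) = ∑' i, ‖(u : ℕ → ℂ) i‖ * ‖(v : ℕ → ℂ) i‖ := by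
    rw [lp.inner_eq_tsum]
    congr 1
    funext i; simp [RCLike.inner_apply, starRingEnd_apply, absVec_apply, mul_comm]
  linarith [this ▸ h]


lemma summable_norm_sq (a : ell2) : Summable fun i => ‖(a : ℕ → ℂ) i‖ ^ 2 := by
  have := (lp.memℓp a).summable (p := 2) (by norm_num)
  rw [two_toReal] at this
  simpa [Real.rpow_natCast] using this

set_option maxHeartbeats 2000000 in
lemma rank1_lower (a b : ell2) (x y : ℕ → ell2)
    (hsum : Summable fun k => ‖x k‖ * ‖y k‖)
    (hrep : ∀ i j, (a : ℕ → ℂ) i * (starRingEnd ℂ) ((b : ℕ → ℂ) j)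
      = ∑' k, (x k : ℕ → ℂ) i * (starRingEnd ℂ) ((y k : ℕ → ℂ) j)) :
    ‖a‖ * ‖b‖ ≤ ∑' k, ‖x k‖ * ‖y k‖ := by
  classical
  set F : ℕ × ℕ × ℕ → ℂ := fun p =>
    ((starRingEnd ℂ) ((a : ℕ → ℂ) p.2.1) * (x p.1 : ℕ → ℂ) p.2.1) *
      ((b : ℕ → ℂ) p.2.2 * (starRingEnd ℂ) ((y p.1 : ℕ → ℂ) p.2.2)) with hFdef
  set G : ℕ × ℕ × ℕ → ℝ := fun p =>
    (‖(a : ℕ → ℂ) p.2.1‖ * ‖(x p.1 : ℕ → ℂ) p.2.1‖) *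
      (‖(b : ℕ → ℂ) p.2.2‖ * ‖(y p.1 : ℕ → ℂ) p.2.2‖) with hGdef
  have hGnn : 0 ≤ G := fun p => by positivity
  have hGk : ∀ k : ℕ, Summable fun q : ℕ × ℕ => G (k, q) := fun k =>
    (abs_pairing_summable a (x k)).mul_of_nonneg (abs_pairing_summable b (y k))
      (fun i => by positivity) (fun j => by positivity)
  have hGtsum : ∀ k : ℕ, ∑' q : ℕ × ℕ, G (k, q) ≤ (‖a‖ * ‖x k‖) * (‖b‖ * ‖y k‖) := by
    intro k
    have he : ∑' q : ℕ × ℕ, G (k, q)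
        = (∑' i, ‖(a : ℕ → ℂ) i‖ * ‖(x k : ℕ → ℂ) i‖) *
          (∑' j, ‖(b : ℕ → ℂ) j‖ * ‖(y k : ℕ → ℂ) j‖) :=
      (Summable.tsum_mul_tsum (abs_pairing_summable a (x k)) (abs_pairing_summable b (y k)) (hGk k)).symm
    rw [he]
    exact mul_le_mul (abs_pairing_le a (x k)) (abs_pairing_le b (y k))
      (tsum_nonneg fun j => by positivity) (by positivity)
  have hmaj : Summable fun k => (‖a‖ * ‖x k‖) * (‖b‖ * ‖y k‖) := by
    have : (fun k => (‖a‖ * ‖x k‖) * (‖b‖ * ‖y k‖))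
        = fun k => (‖a‖ * ‖b‖) * (‖x k‖ * ‖y k‖) := by funext k; ring
    rw [this]; exact hsum.mul_left _
  have hG : Summable G := by
    refine (summable_prod_of_nonneg hGnn).2 ⟨hGk, ?_⟩
    exact Summable.of_nonneg_of_le (fun k => tsum_nonneg fun q => hGnn _) hGtsum hmaj
  have hF : Summable F := by
    apply Summable.of_norm
    have : (fun p => ‖F p‖) = G := by
      funext p; simp [hFdef, hGdef, norm_mul]
    rw [this]; exact hG
  set c : ℕ → ℂ := fun k => ∑' i, (starRingEnd ℂ) ((a : ℕ → ℂ) i) * (x k : ℕ → ℂ) i with hcdef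
  set d : ℕ → ℂ := fun k => ∑' j, (b : ℕ → ℂ) j * (starRingEnd ℂ) ((y k : ℕ → ℂ) j) with hddef
  have hcsum : ∀ k, Summable fun i => (starRingEnd ℂ) ((a : ℕ → ℂ) i) * (x k : ℕ → ℂ) i :=
    fun k => Summable.of_norm (by simpa [norm_mul] using abs_pairing_summable a (x k))
  have hdsum : ∀ k, Summable fun j => (b : ℕ → ℂ) j * (starRingEnd ℂ) ((y k : ℕ → ℂ) j) :=
    fun k => Summable.of_norm (by simpa [norm_mul] using abs_pairing_summable b (y k))
  have hck : ∀ k, ‖c k‖ ≤ ‖a‖ * ‖x k‖ := by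
    intro k
    refine le_trans (norm_tsum_le_tsum_norm ?_) ?_
    · simpa [norm_mul] using abs_pairing_summable a (x k)
    · calc ∑' i, ‖(starRingEnd ℂ) ((a : ℕ → ℂ) i) * (x k : ℕ → ℂ) i‖
          = ∑' i, ‖(a : ℕ → ℂ) i‖ * ‖(x k : ℕ → ℂ) i‖ := by
            congr 1; funext i; simp [norm_mul]
        _ ≤ ‖a‖ * ‖x k‖ := abs_pairing_le a (x k)
  have hdk : ∀ k, ‖d k‖ ≤ ‖b‖ * ‖y k‖ := by
    intro k
    refine le_trans (norm_tsum_le_tsum_norm ?_) ?_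
    · simpa [norm_mul] using abs_pairing_summable b (y k)
    · calc ∑' j, ‖(b : ℕ → ℂ) j * (starRingEnd ℂ) ((y k : ℕ → ℂ) j)‖
          = ∑' j, ‖(b : ℕ → ℂ) j‖ * ‖(y k : ℕ → ℂ) j‖ := by
            congr 1; funext j; simp [norm_mul]
        _ ≤ ‖b‖ * ‖y k‖ := abs_pairing_le b (y k)
  -- first evaluation of the triple sum
  have E1 : ∑' p, F p = ∑' k, c k * d k := by
    rw [Summable.tsum_prod hF]
    congr 1; funext k
    exact (Summable.tsum_mul_tsum (hcsum k) (hdsum k) (hF.prod_factor k)).symm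
  -- second evaluation of the triple sum
  have E2 : ∑' p, F p = ((‖a‖ ^ 2 * ‖b‖ ^ 2 : ℝ) : ℂ) := by
    have hswap : ∑' p, F p = ∑' q : ℕ × ℕ, ∑' k, F (k, q) := by
      rw [Summable.tsum_prod hF]
      have hunc : Summable (Function.uncurry fun (k : ℕ) (q : ℕ × ℕ) => F (k, q)) := hF
      exact (Summable.tsum_comm hunc).symm
    rw [hswap]
    have hq : ∀ q : ℕ × ℕ, ∑' k, F (k, q)
        = ((‖(a : ℕ → ℂ) q.1‖ ^ 2 * ‖(b : ℕ → ℂ) q.2‖ ^ 2 : ℝ) : ℂ) := by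
      rintro ⟨i, j⟩
      have h1 : (fun k => F (k, (i, j)))
          = fun k => ((starRingEnd ℂ) ((a : ℕ → ℂ) i) * (b : ℕ → ℂ) j) *
              ((x k : ℕ → ℂ) i * (starRingEnd ℂ) ((y k : ℕ → ℂ) j)) := by
        funext k; simp only [hFdef]; ring
      rw [h1, tsum_mul_left, ← hrep i j]
      have h2 : (starRingEnd ℂ) ((a : ℕ → ℂ) i) * (b : ℕ → ℂ) j *
            ((a : ℕ → ℂ) i * (starRingEnd ℂ) ((b : ℕ → ℂ) j))
          = ((starRingEnd ℂ) ((a : ℕ → ℂ) i) * (a : ℕ → ℂ) i) *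
            ((b : ℕ → ℂ) j * (starRingEnd ℂ) ((b : ℕ → ℂ) j)) := by ring
      rw [h2, RCLike.conj_mul, RCLike.mul_conj]
      norm_cast
    rw [tsum_congr hq]
    have hsum1 : Summable fun i : ℕ => ‖(a : ℕ → ℂ) i‖ ^ 2 := summable_norm_sq a
    have hsum2 : Summable fun j : ℕ => ‖(b : ℕ → ℂ) j‖ ^ 2 := summable_norm_sq b
    have hprod : Summable fun q : ℕ × ℕ => ‖(a : ℕ → ℂ) q.1‖ ^ 2 * ‖(b : ℕ → ℂ) q.2‖ ^ 2 :=
      hsum1.mul_of_nonneg hsum2 (fun i => by positivity) (fun j => by positivity)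
    calc ∑' q : ℕ × ℕ, ((‖(a : ℕ → ℂ) q.1‖ ^ 2 * ‖(b : ℕ → ℂ) q.2‖ ^ 2 : ℝ) : ℂ)
        = ((∑' q : ℕ × ℕ, ‖(a : ℕ → ℂ) q.1‖ ^ 2 * ‖(b : ℕ → ℂ) q.2‖ ^ 2 : ℝ) : ℂ) := by
          rw [Complex.ofReal_tsum]
      _ = (((∑' i, ‖(a : ℕ → ℂ) i‖ ^ 2) * (∑' j, ‖(b : ℕ → ℂ) j‖ ^ 2) : ℝ) : ℂ) := by
          rw [Summable.tsum_mul_tsum hsum1 hsum2 hprod]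
      _ = ((‖a‖ ^ 2 * ‖b‖ ^ 2 : ℝ) : ℂ) := by
          rw [← ell2_norm_sq, ← ell2_norm_sq]
  -- conclude
  have hcd_sum : Summable fun k => ‖c k * d k‖ := by
    refine Summable.of_nonneg_of_le (fun k => norm_nonneg _) (fun k => ?_) hmaj
    rw [norm_mul]
    exact mul_le_mul (hck k) (hdk k) (norm_nonneg _) (by positivity)
  have key : ‖a‖ ^ 2 * ‖b‖ ^ 2 ≤ (‖a‖ * ‖b‖) * ∑' k, ‖x k‖ * ‖y k‖ := by
    have h0 : ((‖a‖ ^ 2 * ‖b‖ ^ 2 : ℝ) : ℂ) = ∑' k, c k * d k := by rw [← E2, E1]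
    have h1 : ‖a‖ ^ 2 * ‖b‖ ^ 2 = ‖∑' k, c k * d k‖ := by
      rw [← h0, Complex.norm_real]
      exact (Real.norm_of_nonneg (by positivity)).symm
    rw [h1]
    calc ‖∑' k, c k * d k‖ ≤ ∑' k, ‖c k * d k‖ := norm_tsum_le_tsum_norm hcd_sum
      _ ≤ ∑' k, (‖a‖ * ‖x k‖) * (‖b‖ * ‖y k‖) :=
          Summable.tsum_le_tsum (fun k => by
            rw [norm_mul]
            exact mul_le_mul (hck k) (hdk k) (norm_nonneg _) (by positivity)) hcd_sum hmaj
      _ = (‖a‖ * ‖b‖) * ∑' k, ‖x k‖ * ‖y k‖ := by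
          rw [← tsum_mul_left]
          congr 1; funext k; ring
  rcases eq_or_lt_of_le (mul_nonneg (norm_nonneg a) (norm_nonneg b)) with h | h
  · rw [← h]
    exact tsum_nonneg fun k => mul_nonneg (norm_nonneg _) (norm_nonneg _)
  · nlinarith [key]

lemma rank1 (a b : ell2) :
    IsTraceClass (fun i j => (a : ℕ → ℂ) i * (starRingEnd ℂ) ((b : ℕ → ℂ) j)) ∧
    traceNorm (fun i j => (a : ℕ → ℂ) i * (starRingEnd ℂ) ((b : ℕ → ℂ) j)) = ‖a‖ * ‖b‖ := by
  classical
  set x : ℕ → ell2 := fun k => if k = 0 then a else 0 with hx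
  set y : ℕ → ell2 := fun k => if k = 0 then b else 0 with hy
  have hxy0 : ∀ k, k ≠ 0 → ‖x k‖ * ‖y k‖ = 0 := fun k hk => by simp [hx, hy, hk]
  have hsum : Summable fun k => ‖x k‖ * ‖y k‖ :=
    summable_of_ne_finset_zero (s := {0}) (fun k hk => hxy0 k (by simpa using hk))
  have htsum : ∑' k, ‖x k‖ * ‖y k‖ = ‖a‖ * ‖b‖ := by
    rw [tsum_eq_single 0 hxy0]; simp [hx, hy]
  have hrep : ∀ i j, (a : ℕ → ℂ) i * (starRingEnd ℂ) ((b : ℕ → ℂ) j)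
      = ∑' k, (x k : ℕ → ℂ) i * (starRingEnd ℂ) ((y k : ℕ → ℂ) j) := by
    intro i j
    rw [tsum_eq_single 0 (fun k hk => by simp [hx, hy, hk, lp.coeFn_zero])]
    simp [hx, hy]
  refine ⟨⟨x, y, hsum, hrep⟩, ?_⟩
  apply le_antisymm
  · exact csInf_le
      ⟨0, fun t ht => by
        obtain ⟨x', y', hs', _, rfl⟩ := ht
        exact tsum_nonneg fun k => mul_nonneg (norm_nonneg _) (norm_nonneg _)⟩
      ⟨x, y, hsum, hrep, htsum.symm⟩
  · refine le_csInf ⟨‖a‖ * ‖b‖, ?_⟩ ?_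
    · exact ⟨x, y, hsum, hrep, htsum.symm⟩
    rintro t ⟨x', y', hs', hr', rfl⟩
    exact rank1_lower a b x' y' hs' hr'

def geomVec (t : ℂ) (ht : ‖t‖ < 1) : ell2 :=
  ⟨fun n => t ^ n, by
    apply memℓp_gen
    rw [two_toReal]
    have hgeo : Summable fun n : ℕ => (‖t‖ ^ 2) ^ n :=
      summable_geometric_of_lt_one (by positivity) (by nlinarith [norm_nonneg t])
    have he : (fun n : ℕ => ‖t ^ n‖ ^ (2:ℕ)) = fun n : ℕ => (‖t‖ ^ 2) ^ n := by
      funext n; rw [norm_pow, ← pow_mul, ← pow_mul, Nat.mul_comm]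
    simp only [Real.rpow_natCast]
    exact he ▸ hgeo⟩

lemma geomVec_apply (t : ℂ) (ht : ‖t‖ < 1) (n : ℕ) :
    ((geomVec t ht : ell2) : ℕ → ℂ) n = t ^ n := rfl

lemma geomVec_norm_sq (t : ℂ) (ht : ‖t‖ < 1) :
    ‖geomVec t ht‖ ^ 2 = (1 - ‖t‖ ^ 2)⁻¹ := by
  rw [ell2_norm_sq]
  have he : (fun n : ℕ => ‖((geomVec t ht : ell2) : ℕ → ℂ) n‖ ^ 2)
      = fun n : ℕ => (‖t‖ ^ 2) ^ n := by
    funext n; rw [geomVec_apply, norm_pow, ← pow_mul, ← pow_mul, Nat.mul_comm]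
  rw [he, tsum_geometric_of_lt_one (by positivity) (by nlinarith [norm_nonneg t])]



/-- For `|s| < 1`, the function `φ_s(n) = sⁿ` belongs to `𝒞` and
`‖φ_s‖_𝒞 = |1−s|/(1−|s|)`. -/
theorem stmt2 (s : ℂ) (hs : ‖s‖ < 1) :
    MemC (fun n : ℕ => s ^ n) ∧
      CNorm (fun n : ℕ => s ^ n) = ‖1 - s‖ / (1 - ‖s‖) := by
  have hconj : ‖(starRingEnd ℂ) s‖ < 1 := by simpa using hs
  set g : ell2 := geomVec s hs with hg
  set gb : ell2 := geomVec ((starRingEnd ℂ) s) hconj with hgbdef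
  have hg2 : ‖g‖ ^ 2 = (1 - ‖s‖ ^ 2)⁻¹ := geomVec_norm_sq s hs
  have hgb2 : ‖gb‖ ^ 2 = (1 - ‖s‖ ^ 2)⁻¹ := by
    rw [hgbdef, geomVec_norm_sq]; simp
  have hgb : ‖gb‖ = ‖g‖ := by nlinarith [norm_nonneg gb, norm_nonneg g]
  have hconjpow : ∀ j : ℕ, (starRingEnd ℂ) (((gb : ell2) : ℕ → ℂ) j) = s ^ j := by
    intro j
    rw [hgbdef, geomVec_apply, map_pow, Complex.conj_conj]
  have hH : hankelH (fun n : ℕ => s ^ n) =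
      fun i j => (((1 - s) • g : ell2) : ℕ → ℂ) i * (starRingEnd ℂ) ((gb : ℕ → ℂ) j) := by
    funext i j
    rw [hankelH]
    rw [hconjpow j, lp.coeFn_smul, Pi.smul_apply, hg, geomVec_apply, smul_eq_mul]
    rw [pow_succ, pow_add]; ring
  have hK : hankelK (fun n : ℕ => s ^ n) =
      fun i j => ((((1 - s) * s) • g : ell2) : ℕ → ℂ) i * (starRingEnd ℂ) ((gb : ℕ → ℂ) j) := by
    funext i j
    rw [hankelK]
    rw [hconjpow j, lp.coeFn_smul, Pi.smul_apply, hg, geomVec_apply, smul_eq_mul]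
    rw [pow_succ, pow_succ, pow_add]; ring
  have hlim : limUnder atTop (fun n : ℕ => s ^ n) = 0 :=
    (tendsto_pow_atTop_nhds_zero_of_norm_lt_one hs).limUnder_eq
  constructor
  · exact ⟨hH ▸ (rank1 ((1 - s) • g) gb).1, hK ▸ (rank1 (((1 - s) * s) • g) gb).1⟩
  · rw [CNorm, hH, hK, (rank1 ((1 - s) • g) gb).2, (rank1 (((1 - s) * s) • g) gb).2, hlim]
    rw [norm_zero, norm_smul, norm_smul, norm_mul, hgb]
    have hgg : ‖g‖ * ‖g‖ = (1 - ‖s‖ ^ 2)⁻¹ := by nlinarith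
    have ht1 : (0:ℝ) < 1 - ‖s‖ := by linarith
    have ht2 : (0:ℝ) < 1 - ‖s‖ ^ 2 := by nlinarith [norm_nonneg s]
    rw [mul_assoc, mul_assoc, mul_assoc, hgg]
    have h1 : (1 - ‖s‖) ≠ 0 := ne_of_gt ht1
    have h2 : (1 - ‖s‖ ^ 2) ≠ 0 := ne_of_gt ht2
    have h3 : ‖1 - s‖ / (1 - ‖s‖ ^ 2) + ‖1 - s‖ * (‖s‖ / (1 - ‖s‖ ^ 2)) + 0
        = (‖1 - s‖ + ‖1 - s‖ * ‖s‖) / (1 - ‖s‖ ^ 2) := by ring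
    have h4 : ‖1 - s‖ * (1 - ‖s‖ ^ 2)⁻¹ + ‖1 - s‖ * (‖s‖ * (1 - ‖s‖ ^ 2)⁻¹) + 0
        = (‖1 - s‖ + ‖1 - s‖ * ‖s‖) / (1 - ‖s‖ ^ 2) := by
      rw [← h3]; ring
    rw [h4, div_eq_div_iff h2 h1]
    ring

end
end

section
/- Let φ : ℕ → ℂ satisfy ∑_{n=0}^∞ |φ(n) − φ(n+1)| < ∞ and define ψ₁(n) = ∑_{i=0}^∞ (φ(n+2i) − φ(n+2i+1)) and ψ₂(n) = ψ₁(n+1). Suppose (x_m)_{m∈ℕ}, (y_m)_{m∈ℕ} are sequences in ℓ²(ℕ;ℂ) with ∑_{m=0}^∞ ‖x_m‖₂·‖y_m‖₂ < ∞ and φ(i+j) − φ(i+j+1) = ∑_{m=0}^∞ x_m(i)·conj(y_m(j)) for all i,j ∈ ℕ, and (z_m)_{m∈ℕ}, (w_m)_{m∈ℕ} are sequences in ℓ²(ℕ;ℂ) with ∑_{m=0}^∞ ‖z_m‖₂·‖w_m‖₂ < ∞ and φ(i+j+1) − φ(i+j+2) = ∑_{m=0}^∞ z_m(i)·conj(w_m(j))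 for all i,j ∈ ℕ. Then for all k,l ∈ ℕ the iterated series below converge absolutely and ψ₁(k+l) = ∑_{m=0}^∞ ∑_{t=0}^∞ x_m(k+t)·conj(y_m(l+t)) and ψ₂(k+l) = ∑_{m=0}^∞ ∑_{t=0}^∞ z_m(k+t)·conj(w_m(l+t)). -/
open MeasureTheory Filter

noncomputable section

/-- `ψ₁(n) = ∑_{i=0}^∞ (φ(n+2i) − φ(n+2i+1))`. -/
def psiOne (φ : ℕ → ℂ) (n : ℕ) : ℂ := ∑' i : ℕ, (φ (n + 2*i) - φ (n + 2*i + 1))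

/-- `ψ₂(n) = ψ₁(n+1)`. -/
def psiTwo (φ : ℕ → ℂ) (n : ℕ) : ℂ := psiOne φ (n + 1)

private lemma cs_shift (a b : ell2) (k l : ℕ) :
    (Summable fun t : ℕ => ‖(a : ℕ → ℂ) (k+t)‖ * ‖(b : ℕ → ℂ) (l+t)‖) ∧
    ∑' t : ℕ, ‖(a : ℕ → ℂ) (k+t)‖ * ‖(b : ℕ → ℂ) (l+t)‖ ≤ ‖a‖ * ‖b‖ := by
  have hp : (0:ℝ) < (2:ENNReal).toReal := by norm_num
  have ha : Summable fun i : ℕ => ‖(a : ℕ → ℂ) i‖ ^ (2:ℝ) := by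
    simpa using (lp.memℓp a).summable hp
  have hb : Summable fun i : ℕ => ‖(b : ℕ → ℂ) i‖ ^ (2:ℝ) := by
    simpa using (lp.memℓp b).summable hp
  have hinjk : Function.Injective (fun t : ℕ => k + t) := fun t u h => by simpa using h
  have hinjl : Function.Injective (fun t : ℕ => l + t) := fun t u h => by simpa using h
  have hka : Summable fun t : ℕ => ‖(a : ℕ → ℂ) (k+t)‖ ^ (2:ℝ) := ha.comp_injective hinjk
  have hlb : Summable fun t : ℕ => ‖(b : ℕ → ℂ) (l+t)‖ ^ (2:ℝ) := hb.comp_injective hinjl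
  have hpq : (2:ℝ).HolderConjugate 2 := by
    exact (Real.holderConjugate_iff_eq_conjExponent (by norm_num)).2 (by norm_num)
  obtain ⟨hsum, hle⟩ := Real.summable_and_inner_le_Lp_mul_Lq_tsum_of_nonneg hpq
    (fun t => norm_nonneg ((a : ℕ → ℂ) (k+t))) (fun t => norm_nonneg ((b : ℕ → ℂ) (l+t))) hka hlb
  refine ⟨hsum, hle.trans ?_⟩
  have hna : ∑' t : ℕ, ‖(a : ℕ → ℂ) (k+t)‖ ^ (2:ℝ) ≤ ‖a‖ ^ (2:ℝ) := by
    have := lp.norm_rpow_eq_tsum hp a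
    simp only [ENNReal.toReal_ofNat] at this
    rw [this]
    exact hka.tsum_le_tsum_of_inj _ hinjk (fun c _ => Real.rpow_nonneg (norm_nonneg _) _)
      (fun t => le_rfl) ha
  have hnb : ∑' t : ℕ, ‖(b : ℕ → ℂ) (l+t)‖ ^ (2:ℝ) ≤ ‖b‖ ^ (2:ℝ) := by
    have := lp.norm_rpow_eq_tsum hp b
    simp only [ENNReal.toReal_ofNat] at this
    rw [this]
    exact hlb.tsum_le_tsum_of_inj _ hinjl (fun c _ => Real.rpow_nonneg (norm_nonneg _) _)
      (fun t => le_rfl) hb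
  have e : ∀ c : ℝ, 0 ≤ c → (c ^ (2:ℝ)) ^ ((1:ℝ)/2) = c := by
    intro c hc
    rw [← Real.rpow_mul hc]
    norm_num
  calc (∑' t : ℕ, ‖(a : ℕ → ℂ) (k+t)‖ ^ (2:ℝ)) ^ ((1:ℝ)/2) *
        (∑' t : ℕ, ‖(b : ℕ → ℂ) (l+t)‖ ^ (2:ℝ)) ^ ((1:ℝ)/2)
      ≤ (‖a‖ ^ (2:ℝ)) ^ ((1:ℝ)/2) * (‖b‖ ^ (2:ℝ)) ^ ((1:ℝ)/2) :=
        mul_le_mul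
          (Real.rpow_le_rpow (tsum_nonneg fun t => Real.rpow_nonneg (norm_nonneg _) _) hna (by norm_num))
          (Real.rpow_le_rpow (tsum_nonneg fun t => Real.rpow_nonneg (norm_nonneg _) _) hnb (by norm_num))
          (Real.rpow_nonneg (tsum_nonneg fun t => Real.rpow_nonneg (norm_nonneg _) _) _)
          (Real.rpow_nonneg (Real.rpow_nonneg (norm_nonneg _) _) _)
    _ = ‖a‖ * ‖b‖ := by rw [e _ (norm_nonneg a), e _ (norm_nonneg b)]

private lemma rep_diag (x y : ℕ → ell2) (hxy : Summable fun m => ‖x m‖ * ‖y m‖)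
    (g : ℕ → ℂ)
    (hrep : ∀ i j : ℕ, g (i+j) = ∑' m, (x m : ℕ → ℂ) i * (starRingEnd ℂ) ((y m : ℕ → ℂ) j))
    (k l : ℕ) :
    (∀ m : ℕ, Summable fun t : ℕ =>
      ‖(x m : ℕ → ℂ) (k+t) * (starRingEnd ℂ) ((y m : ℕ → ℂ) (l+t))‖) ∧
    (Summable fun m : ℕ =>
      ∑' t : ℕ, ‖(x m : ℕ → ℂ) (k+t) * (starRingEnd ℂ) ((y m : ℕ → ℂ) (l+t))‖) ∧
    (∑' t : ℕ, g (k + l + 2*t)) =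
      ∑' m : ℕ, ∑' t : ℕ, (x m : ℕ → ℂ) (k+t) * (starRingEnd ℂ) ((y m : ℕ → ℂ) (l+t)) := by
  set F : ℕ → ℕ → ℂ :=
    fun m t => (x m : ℕ → ℂ) (k+t) * (starRingEnd ℂ) ((y m : ℕ → ℂ) (l+t)) with hF
  have hnorm : ∀ m t, ‖F m t‖ = ‖(x m : ℕ → ℂ) (k+t)‖ * ‖(y m : ℕ → ℂ) (l+t)‖ := by
    intro m t; simp [hF]
  have h1 : ∀ m, Summable fun t => ‖F m t‖ := fun m =>
    ((cs_shift (x m) (y m) k l).1).congr (fun t => (hnorm m t).symm)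
  have hbd : ∀ m, (∑' t, ‖F m t‖) ≤ ‖x m‖ * ‖y m‖ := by
    intro m
    rw [tsum_congr (hnorm m)]
    exact (cs_shift (x m) (y m) k l).2
  have h2 : Summable fun m => ∑' t, ‖F m t‖ :=
    Summable.of_nonneg_of_le (fun m => tsum_nonneg fun t => norm_nonneg _) hbd hxy
  have hdouble : Summable fun p : ℕ × ℕ => ‖F p.1 p.2‖ :=
    (summable_prod_of_nonneg fun p => norm_nonneg _).2 ⟨h1, h2⟩
  have hFsum : Summable (Function.uncurry F) := Summable.of_norm hdouble
  have h4 : ∀ m, Summable (F m) := fun m => (h1 m).of_norm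
  have h3 : ∀ t, Summable fun m => F m t := by
    intro t
    refine Summable.of_norm (Summable.of_nonneg_of_le (fun m => norm_nonneg _) (fun m => ?_) hxy)
    rw [hnorm]
    exact mul_le_mul (lp.norm_apply_le_norm two_ne_zero (x m) (k+t))
      (lp.norm_apply_le_norm two_ne_zero (y m) (l+t)) (norm_nonneg _) (norm_nonneg _)
  have hswap : ∑' (t : ℕ) (m : ℕ), F m t = ∑' (m : ℕ) (t : ℕ), F m t :=
    hFsum.tsum_comm' h4 h3
  refine ⟨h1, h2, ?_⟩
  have hg : ∀ t : ℕ, g (k + l + 2*t) = ∑' m, F m t := by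
    intro t
    have h := hrep (k+t) (l+t)
    rw [show k+t+(l+t) = k+l+2*t from by ring] at h
    exact h
  rw [tsum_congr hg]
  exact hswap

/-- Given trace-class representations
`φ(i+j) − φ(i+j+1) = ∑ₘ xₘ(i)·conj(yₘ(j))` and `φ(i+j+1) − φ(i+j+2) = ∑ₘ zₘ(i)·conj(wₘ(j))`,
the iterated series below converge absolutely and
`ψ₁(k+l) = ∑ₘ ∑ₜ xₘ(k+t)·conj(yₘ(l+t))`, `ψ₂(k+l) = ∑ₘ ∑ₜ zₘ(k+t)·conj(wₘ(l+t))`. -/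
theorem stmt5 (φ : ℕ → ℂ) (hφ : Summable fun n => ‖φ n - φ (n+1)‖)
    (x y z w : ℕ → ell2)
    (hxy : Summable fun m => ‖x m‖ * ‖y m‖)
    (hrep1 : ∀ i j : ℕ, φ (i+j) - φ (i+j+1) =
      ∑' m, (x m : ℕ → ℂ) i * (starRingEnd ℂ) ((y m : ℕ → ℂ) j))
    (hzw : Summable fun m => ‖z m‖ * ‖w m‖)
    (hrep2 : ∀ i j : ℕ, φ (i+j+1) - φ (i+j+2) =
      ∑' m, (z m : ℕ → ℂ) i * (starRingEnd ℂ) ((w m : ℕ → ℂ) j)) :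
    ∀ k l : ℕ,
      (∀ m : ℕ, Summable fun t : ℕ =>
        ‖(x m : ℕ → ℂ) (k+t) * (starRingEnd ℂ) ((y m : ℕ → ℂ) (l+t))‖) ∧
      (Summable fun m : ℕ =>
        ∑' t : ℕ, ‖(x m : ℕ → ℂ) (k+t) * (starRingEnd ℂ) ((y m : ℕ → ℂ) (l+t))‖) ∧
      psiOne φ (k+l) =
        ∑' m : ℕ, ∑' t : ℕ, (x m : ℕ → ℂ) (k+t) * (starRingEnd ℂ) ((y m : ℕ → ℂ) (l+t)) ∧
      (∀ m : ℕ, Summable fun t : ℕ =>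
        ‖(z m : ℕ → ℂ) (k+t) * (starRingEnd ℂ) ((w m : ℕ → ℂ) (l+t))‖) ∧
      (Summable fun m : ℕ =>
        ∑' t : ℕ, ‖(z m : ℕ → ℂ) (k+t) * (starRingEnd ℂ) ((w m : ℕ → ℂ) (l+t))‖) ∧
      psiTwo φ (k+l) =
        ∑' m : ℕ, ∑' t : ℕ, (z m : ℕ → ℂ) (k+t) * (starRingEnd ℂ) ((w m : ℕ → ℂ) (l+t)) := by
  intro k l
  obtain ⟨h1, h2, h3⟩ := rep_diag x y hxy (fun n => φ n - φ (n+1)) hrep1 k l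
  obtain ⟨h4, h5, h6⟩ := rep_diag z w hzw (fun n => φ (n+1) - φ (n+2)) hrep2 k l
  refine ⟨h1, h2, ?_, h4, h5, ?_⟩
  · rw [psiOne]; exact h3
  · rw [psiTwo, psiOne, ← h6]
    exact tsum_congr fun t => by
      rw [show k+l+1+2*t = k+l+2*t+1 from by ring, show k+l+2*t+1+1 = k+l+2*t+2 from by ring]

end
end

section
/- For n ∈ ℕ let χ_n : ℕ → ℂ be defined by χ_n(k) = 1 if k = n and χ_n(k) = 0 otherwise. Then χ_n belongs to the class 𝒞 and ‖χ_n‖_𝒞 ≤ max{1, 4n}. -/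
open MeasureTheory Filter

noncomputable section

-- auxiliary
def eb (i : ℕ) : ell2 := lp.single 2 i (1 : ℂ)

lemma eb_apply (i j : ℕ) : (eb i : ℕ → ℂ) j = if j = i then 1 else 0 := by
  simp [eb, lp.single_apply, Pi.single_apply]

lemma eb_norm (i : ℕ) : ‖eb i‖ = 1 := by
  have := lp.norm_single (p := (2 : ENNReal)) (by norm_num) (E := fun _ : ℕ => ℂ) i (1 : ℂ)
  simpa [eb] using this

lemma traceNorm_bddBelow (h : ℕ → ℕ → ℂ) : BddBelow { c : ℝ | ∃ x y : ℕ → ell2,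
    (Summable fun k => ‖x k‖ * ‖y k‖) ∧
    (∀ i j, h i j = ∑' k, (x k : ℕ → ℂ) i * (starRingEnd ℂ) ((y k : ℕ → ℂ) j)) ∧
    c = ∑' k, ‖x k‖ * ‖y k‖ } := by
  refine ⟨0, fun c hc => ?_⟩
  obtain ⟨x, y, _, _, rfl⟩ := hc
  exact tsum_nonneg fun k => mul_nonneg (norm_nonneg _) (norm_nonneg _)

lemma key (m : ℕ) :
    IsTraceClass (hankelH fun k => if k = m then (1:ℂ) else 0) ∧
    traceNorm (hankelH fun k => if k = m then (1:ℂ) else 0) ≤ 2*m+1 := by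
  set x : ℕ → ell2 := fun k => if k ≤ m then eb k else if k ≤ 2*m then -eb (k - (m+1)) else 0 with hx
  set y : ℕ → ell2 := fun k => if k ≤ m then eb (m - k) else if k ≤ 2*m then eb (2*m - k) else 0 with hy
  have hzero : ∀ k ∉ Finset.range (2*m+1), ‖x k‖ * ‖y k‖ = 0 := by
    intro k hk
    simp only [Finset.mem_range, not_lt] at hk
    have h1 : ¬ k ≤ m := by omega
    have h2 : ¬ k ≤ 2*m := by omega
    simp [hx, h1, h2]
  have hone : ∀ k ∈ Finset.range (2*m+1), ‖x k‖ * ‖y k‖ = 1 := by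
    intro k hk
    simp only [Finset.mem_range] at hk
    by_cases h1 : k ≤ m
    · simp [hx, hy, h1, eb_norm]
    · have h2 : k ≤ 2*m := by omega
      simp [hx, hy, h1, h2, eb_norm]
  have hsummable : Summable fun k => ‖x k‖ * ‖y k‖ :=
    summable_of_ne_finset_zero hzero
  have htsum : (∑' k, ‖x k‖ * ‖y k‖) = 2*m+1 := by
    rw [tsum_eq_sum hzero, Finset.sum_congr rfl hone]
    simp
  have hrep : ∀ i j, hankelH (fun k => if k = m then (1:ℂ) else 0) i j
      = ∑' k, (x k : ℕ → ℂ) i * (starRingEnd ℂ) ((y k : ℕ → ℂ) j) := by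
    intro i j
    have hz2 : ∀ k ∉ Finset.range (2*m+1),
        (x k : ℕ → ℂ) i * (starRingEnd ℂ) ((y k : ℕ → ℂ) j) = 0 := by
      intro k hk
      simp only [Finset.mem_range, not_lt] at hk
      have h1 : ¬ k ≤ m := by omega
      have h2 : ¬ k ≤ 2*m := by omega
      simp [hx, h1, h2]
    rw [tsum_eq_sum hz2]
    have hsplit : 2*m+1 = (m+1) + m := by omega
    rw [hsplit, Finset.sum_range_add]
    have hS1 : (∑ k ∈ Finset.range (m+1),
        (x k : ℕ → ℂ) i * (starRingEnd ℂ) ((y k : ℕ → ℂ) j))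
        = (if i + j = m then 1 else 0) := by
      have : ∀ k ∈ Finset.range (m+1),
          (x k : ℕ → ℂ) i * (starRingEnd ℂ) ((y k : ℕ → ℂ) j)
          = if i = k then (if j = m - k then 1 else 0) else 0 := by
        intro k hk
        simp only [Finset.mem_range] at hk
        have h1 : k ≤ m := by omega
        simp only [hx, hy, if_pos h1, eb_apply, apply_ite (starRingEnd ℂ), ite_mul, mul_ite, map_one, map_zero, one_mul, mul_one, zero_mul, mul_zero]
        split_ifs <;> simp
      rw [Finset.sum_congr rfl this, Finset.sum_ite_eq]
      simp only [Finset.mem_range]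
      have : (i < m + 1 ∧ j = m - i) ↔ i + j = m := by omega
      rw [← ite_and, if_congr this rfl rfl]
    have hS2 : (∑ k ∈ Finset.range m,
        (x (m+1+k) : ℕ → ℂ) i * (starRingEnd ℂ) ((y (m+1+k) : ℕ → ℂ) j))
        = -(if i + j + 1 = m then 1 else 0) := by
      have : ∀ k ∈ Finset.range m,
          (x (m+1+k) : ℕ → ℂ) i * (starRingEnd ℂ) ((y (m+1+k) : ℕ → ℂ) j)
          = if i = k then -(if j = m - 1 - k then 1 else 0) else 0 := by
        intro k hk
        simp only [Finset.mem_range] at hk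
        have h1 : ¬ m+1+k ≤ m := by omega
        have h2 : m+1+k ≤ 2*m := by omega
        have h3 : m+1+k - (m+1) = k := by omega
        have h4 : 2*m - (m+1+k) = m-1-k := by omega
        simp only [hx, hy, if_neg h1, if_pos h2, h3, h4, eb_apply, lp.coeFn_neg, Pi.neg_apply, apply_ite (starRingEnd ℂ), ite_mul, mul_ite, map_one, map_zero, one_mul, mul_one, zero_mul, mul_zero, neg_mul, neg_zero]
        split_ifs <;> simp
      rw [Finset.sum_congr rfl this]
      have : ∀ k ∈ Finset.range m, (if i = k then -(if j = m - 1 - k then (1:ℂ) else 0) else 0)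
          = -(if i = k then (if j = m - 1 - k then (1:ℂ) else 0) else 0) := by
        intro k _; split <;> simp
      rw [Finset.sum_congr rfl this, Finset.sum_neg_distrib, Finset.sum_ite_eq]
      simp only [Finset.mem_range]
      have h5 : (i < m ∧ j = m - 1 - i) ↔ i + j + 1 = m := by omega
      rw [← ite_and, if_congr h5 rfl rfl]
    rw [hS1, hS2]
    simp only [hankelH]
    rw [sub_eq_add_neg]
  constructor
  · exact ⟨x, y, hsummable, hrep⟩
  · have hmem : (2*(m:ℝ)+1) ∈ { c : ℝ | ∃ x y : ℕ → ell2,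
        (Summable fun k => ‖x k‖ * ‖y k‖) ∧
        (∀ i j, hankelH (fun k => if k = m then (1:ℂ) else 0) i j
          = ∑' k, (x k : ℕ → ℂ) i * (starRingEnd ℂ) ((y k : ℕ → ℂ) j)) ∧
        c = ∑' k, ‖x k‖ * ‖y k‖ } := by
      exact ⟨x, y, hsummable, hrep, by rw [htsum]⟩
    have := csInf_le (traceNorm_bddBelow _) hmem
    exact this

lemma zeroMat : IsTraceClass (hankelK fun k => if k = 0 then (1:ℂ) else 0) ∧
    traceNorm (hankelK fun k => if k = 0 then (1:ℂ) else 0) ≤ 0 := by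
  have hrep : ∀ i j, hankelK (fun k => if k = 0 then (1:ℂ) else 0) i j
      = ∑' k, ((fun _ : ℕ => (0 : ell2)) k : ℕ → ℂ) i *
          (starRingEnd ℂ) (((fun _ : ℕ => (0 : ell2)) k : ℕ → ℂ) j) := by
    intro i j
    simp [hankelK]
  have hsummable : Summable fun k : ℕ => ‖(0 : ell2)‖ * ‖(0 : ell2)‖ := by
    simpa using summable_zero
  constructor
  · exact ⟨fun _ => 0, fun _ => 0, hsummable, hrep⟩
  · refine csInf_le (traceNorm_bddBelow _) ⟨fun _ => 0, fun _ => 0, hsummable, hrep, by simp⟩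

lemma hankelK_succ (m : ℕ) :
    hankelK (fun k => if k = m + 1 then (1:ℂ) else 0)
      = hankelH (fun k => if k = m then (1:ℂ) else 0) := by
  funext i j
  simp only [hankelK, hankelH]
  have h1 : (i + j + 1 = m + 1) ↔ (i + j = m) := by omega
  have h2 : (i + j + 2 = m + 1) ↔ (i + j + 1 = m) := by omega
  rw [if_congr h1 rfl rfl, if_congr h2 rfl rfl]

lemma lim_chi (n : ℕ) : limUnder atTop (fun k : ℕ => if k = n then (1:ℂ) else 0) = 0 := by
  have hev : ∀ᶠ k in atTop, (if k = n then (1:ℂ) else 0) = 0 :=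
    eventually_atTop.2 ⟨n+1, fun k hk => if_neg (by omega)⟩
  have : Tendsto (fun k : ℕ => if k = n then (1:ℂ) else 0) atTop (nhds 0) :=
    Tendsto.congr' (hev.mono fun k h => h.symm) tendsto_const_nhds
  exact this.limUnder_eq


/-- The indicator function `χ_n` belongs to `𝒞` and
`‖χ_n‖_𝒞 ≤ max {1, 4n}`. -/
theorem stmt6 (n : ℕ) :
    MemC (fun k : ℕ => if k = n then (1 : ℂ) else 0) ∧
      CNorm (fun k : ℕ => if k = n then (1 : ℂ) else 0) ≤ max 1 (4 * (n : ℝ)) := by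
  obtain ⟨hH1, hH2⟩ := key n
  have hK : IsTraceClass (hankelK fun k => if k = n then (1:ℂ) else 0) ∧
      traceNorm (hankelK fun k => if k = n then (1:ℂ) else 0) ≤ max 0 (2*(n:ℝ)-1) := by
    cases n with
    | zero =>
      obtain ⟨h1, h2⟩ := zeroMat
      exact ⟨h1, h2.trans (le_max_left _ _)⟩
    | succ m =>
      rw [hankelK_succ m]
      obtain ⟨h1, h2⟩ := key m
      refine ⟨h1, h2.trans ?_⟩
      refine le_trans ?_ (le_max_right _ _)
      push_cast; linarith
  refine ⟨⟨hH1, hK.1⟩, ?_⟩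
  rw [CNorm, lim_chi]
  simp only [norm_zero, add_zero]
  cases n with
  | zero =>
    have h0 : traceNorm (hankelK fun k => if k = 0 then (1:ℂ) else 0) ≤ 0 := by
      refine le_trans hK.2 ?_
      norm_num
    refine le_trans (add_le_add hH2 h0) ?_
    norm_num
  | succ m =>
    have h2 := hK.2
    have hm : max (0:ℝ) (2*((m:ℝ)+1)-1) = 2*((m:ℝ)+1)-1 := by
      rw [max_eq_right]
      have : (0:ℝ) ≤ (m:ℝ) := Nat.cast_nonneg m
      linarith
    push_cast at h2 hH2 ⊢
    rw [hm] at h2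
    calc traceNorm _ + traceNorm _ ≤ (2*((m:ℝ)+1)+1) + (2*((m:ℝ)+1)-1) :=
        add_le_add hH2 h2
      _ = 4*((m:ℝ)+1) := by ring
      _ ≤ max 1 (4*((m:ℝ)+1)) := le_max_right _ _

end
end

section
/- Let r ∈ (0,1). Define φ_r : ℕ → ℂ by φ_r(k) = r^k, and for n ∈ ℕ define φ_{r,n} : ℕ → ℂ by φ_{r,n}(k) = r^k for 0 ≤ k ≤ n and φ_{r,n}(k) = 0 for k > n. Then φ_r and every φ_{r,n} belong to the class 𝒞, ‖φ_r‖_𝒞 = 1, ‖φ_r − φ_{r,n}‖_𝒞 ≤ ∑_{k=n+1}^∞ 4k·r^k for every n, and consequently lim_{n→∞} ‖φ_r − φ_{r,n}‖_𝒞 = 0. -/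
open MeasureTheory Filter
open scoped ENNReal

set_option maxHeartbeats 1000000

noncomputable section

/- ## Auxiliary results -/

lemma traceNorm_nonneg (h : ℕ → ℕ → ℂ) : 0 ≤ traceNorm h := by
  apply Real.sInf_nonneg
  rintro c ⟨x, y, hs, hrep, rfl⟩
  exact tsum_nonneg fun k => mul_nonneg (norm_nonneg _) (norm_nonneg _)

lemma traceNorm_le (h : ℕ → ℕ → ℂ) (x y : ℕ → ell2)
    (hs : Summable fun k => ‖x k‖ * ‖y k‖)
    (hrep : ∀ i j, h i j = ∑' k, (x k : ℕ → ℂ) i * (starRingEnd ℂ) ((y k : ℕ → ℂ) j)) :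
    traceNorm h ≤ ∑' k, ‖x k‖ * ‖y k‖ := by
  apply csInf_le
  · refine ⟨0, ?_⟩
    rintro c ⟨x', y', hs', hrep', rfl⟩
    exact tsum_nonneg fun k => mul_nonneg (norm_nonneg _) (norm_nonneg _)
  · exact ⟨x, y, hs, hrep, rfl⟩

lemma cs_finset (x y : ell2) (F : Finset ℕ) :
    ‖∑ i ∈ F, (x : ℕ → ℂ) i * (starRingEnd ℂ) ((y : ℕ → ℂ) i)‖ ≤ ‖x‖ * ‖y‖ := by
  have h1 : ‖∑ i ∈ F, (x : ℕ → ℂ) i * (starRingEnd ℂ) ((y : ℕ → ℂ) i)‖ ≤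
      ∑ i ∈ F, ‖(x : ℕ → ℂ) i‖ * ‖(y : ℕ → ℂ) i‖ := by
    refine (norm_sum_le _ _).trans (le_of_eq ?_)
    refine Finset.sum_congr rfl fun i _ => ?_
    rw [norm_mul, RCLike.norm_conj]
  refine h1.trans ?_
  have h2 := Finset.sum_mul_sq_le_sq_mul_sq F (fun i => ‖(x : ℕ → ℂ) i‖)
    (fun i => ‖(y : ℕ → ℂ) i‖)
  have hx2 : ∑ i ∈ F, ‖(x : ℕ → ℂ) i‖ ^ 2 ≤ ‖x‖ ^ 2 := by
    have h2r : (2 : ℝ≥0∞).toReal = 2 := by norm_num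
    have := lp.sum_rpow_le_norm_rpow (p := 2) (by norm_num) x F
    rw [h2r] at this
    simpa [Real.rpow_two] using this
  have hy2 : ∑ i ∈ F, ‖(y : ℕ → ℂ) i‖ ^ 2 ≤ ‖y‖ ^ 2 := by
    have h2r : (2 : ℝ≥0∞).toReal = 2 := by norm_num
    have := lp.sum_rpow_le_norm_rpow (p := 2) (by norm_num) y F
    rw [h2r] at this
    simpa [Real.rpow_two] using this
  have hsum_nonneg : (0:ℝ) ≤ ∑ i ∈ F, ‖(x : ℕ → ℂ) i‖ * ‖(y : ℕ → ℂ) i‖ :=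
    Finset.sum_nonneg fun i _ => mul_nonneg (norm_nonneg _) (norm_nonneg _)
  nlinarith [norm_nonneg x, norm_nonneg y, mul_nonneg (norm_nonneg x) (norm_nonneg y),
    Finset.sum_nonneg (fun i (_ : i ∈ F) => sq_nonneg ‖(x : ℕ → ℂ) i‖),
    Finset.sum_nonneg (fun i (_ : i ∈ F) => sq_nonneg ‖(y : ℕ → ℂ) i‖)]

lemma le_traceNorm_diag (h : ℕ → ℕ → ℂ) (htc : IsTraceClass h) (d : ℕ → ℝ)
    (hd : ∀ i, h i i = (d i : ℂ)) (hdsum : Summable d) :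
    ∑' i, d i ≤ traceNorm h := by
  obtain ⟨x₀, y₀, hs₀, hrep₀⟩ := htc
  refine le_csInf ⟨_, x₀, y₀, hs₀, hrep₀, rfl⟩ ?_
  rintro c ⟨x, y, hs, hrep, rfl⟩
  apply Summable.tsum_le_of_sum_le hdsum
  intro F
  have hsumm : ∀ i, Summable fun k => (x k : ℕ → ℂ) i * (starRingEnd ℂ) ((y k : ℕ → ℂ) i) := by
    intro i
    apply Summable.of_norm_bounded hs
    intro k
    rw [norm_mul, RCLike.norm_conj]
    exact mul_le_mul (lp.norm_apply_le_norm (by norm_num) (x k) i)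
      (lp.norm_apply_le_norm (by norm_num) (y k) i) (norm_nonneg _) (norm_nonneg _)
  have key : ∑ i ∈ F, (d i : ℂ) = ∑' k, ∑ i ∈ F, (x k : ℕ → ℂ) i * (starRingEnd ℂ) ((y k : ℕ → ℂ) i) := by
    rw [Summable.tsum_finsetSum (fun i _ => hsumm i)]
    exact Finset.sum_congr rfl fun i _ => by rw [← hd i, hrep i i]
  have hCS : ∀ k, ‖∑ i ∈ F, (x k : ℕ → ℂ) i * (starRingEnd ℂ) ((y k : ℕ → ℂ) i)‖ ≤ ‖x k‖ * ‖y k‖ :=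
    fun k => cs_finset (x k) (y k) F
  have hnormsum : Summable fun k => ‖∑ i ∈ F, (x k : ℕ → ℂ) i * (starRingEnd ℂ) ((y k : ℕ → ℂ) i)‖ :=
    Summable.of_nonneg_of_le (fun k => norm_nonneg _) hCS hs
  calc ∑ i ∈ F, d i ≤ ‖∑ i ∈ F, (d i : ℂ)‖ := by
        rw [← Complex.ofReal_sum, Complex.norm_real, Real.norm_eq_abs]
        exact le_abs_self _
    _ = ‖∑' k, ∑ i ∈ F, (x k : ℕ → ℂ) i * (starRingEnd ℂ) ((y k : ℕ → ℂ) i)‖ := by rw [key]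
    _ ≤ ∑' k, ‖∑ i ∈ F, (x k : ℕ → ℂ) i * (starRingEnd ℂ) ((y k : ℕ → ℂ) i)‖ :=
        norm_tsum_le_tsum_norm hnormsum
    _ ≤ ∑' k, ‖x k‖ * ‖y k‖ := Summable.tsum_le_tsum hCS hnormsum hs

lemma rankOne_rep (h : ℕ → ℕ → ℂ) (u v : ell2)
    (huv : ∀ i j, h i j = (u : ℕ → ℂ) i * (starRingEnd ℂ) ((v : ℕ → ℂ) j)) :
    IsTraceClass h ∧ traceNorm h ≤ ‖u‖ * ‖v‖ := by
  set x : ℕ → ell2 := fun k => if k = 0 then u else 0 with hx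
  set y : ℕ → ell2 := fun k => if k = 0 then v else 0 with hy
  have hs : Summable fun k => ‖x k‖ * ‖y k‖ := by
    apply summable_of_ne_finset_zero (s := {0})
    intro k hk
    simp only [Finset.mem_singleton] at hk
    simp [hx, hy, if_neg hk]
  have hrep : ∀ i j, h i j = ∑' k, (x k : ℕ → ℂ) i * (starRingEnd ℂ) ((y k : ℕ → ℂ) j) := by
    intro i j
    rw [tsum_eq_single 0 ?_]
    · simp [hx, hy, huv i j]
    · intro k hk
      simp [hx, hy, if_neg hk, lp.coeFn_zero]
  refine ⟨⟨x, y, hs, hrep⟩, ?_⟩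
  refine (traceNorm_le h x y hs hrep).trans (le_of_eq ?_)
  rw [tsum_eq_single 0 ?_]
  · simp [hx, hy]
  · intro k hk
    simp [hx, hy, if_neg hk]

lemma antidiag_traceClass (h : ℕ → ℕ → ℂ) (a : ℕ → ℂ)
    (hha : ∀ i j, h i j = a (i + j))
    (ha : Summable fun m : ℕ => ((m : ℝ) + 1) * ‖a m‖) :
    IsTraceClass h ∧ traceNorm h ≤ ∑' m : ℕ, ((m : ℝ) + 1) * ‖a m‖ := by
  classical
  set X : ℕ × ℕ → ell2 := fun p =>
    if p.2 ≤ p.1 then a p.1 • lp.single 2 p.2 (1 : ℂ) else 0 with hX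
  set Y : ℕ × ℕ → ell2 := fun p =>
    if p.2 ≤ p.1 then lp.single 2 (p.1 - p.2) (1 : ℂ) else 0 with hY
  set e : ℕ ≃ ℕ × ℕ := Nat.pairEquiv.symm with he
  set x : ℕ → ell2 := fun k => X (e k) with hx
  set y : ℕ → ell2 := fun k => Y (e k) with hy
  have hnorm_single : ∀ i : ℕ, ‖(lp.single 2 i (1 : ℂ) : ell2)‖ = 1 := by
    intro i
    have := lp.norm_single (E := fun _ : ℕ => ℂ) (p := 2) (by norm_num) i (1 : ℂ)
    simpa using this
  set F : ℕ × ℕ → ℝ := fun p => if p.2 ≤ p.1 then ‖a p.1‖ else 0 with hFdef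
  have hXY : ∀ p, ‖X p‖ * ‖Y p‖ = F p := by
    intro p
    by_cases hp : p.2 ≤ p.1
    · simp only [hX, hY, hFdef, if_pos hp]
      rw [norm_smul, hnorm_single, hnorm_single]
      simp
    · simp [hX, hY, hFdef, if_neg hp]
  have hfiber_supp : ∀ m : ℕ, ∀ i ∉ Finset.range (m + 1), F (m, i) = 0 := by
    intro m i hi
    simp only [Finset.mem_range] at hi
    have : ¬ i ≤ m := by omega
    simp [hFdef, this]
  have hfiber_sum : ∀ m : ℕ, ∑' i, F (m, i) = ((m : ℝ) + 1) * ‖a m‖ := by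
    intro m
    rw [tsum_eq_sum (hfiber_supp m)]
    have : ∀ i ∈ Finset.range (m + 1), F (m, i) = ‖a m‖ := by
      intro i hi
      simp only [Finset.mem_range] at hi
      have : i ≤ m := by omega
      simp [hFdef, this]
    rw [Finset.sum_congr rfl this, Finset.sum_const, Finset.card_range, nsmul_eq_mul]
    push_cast; ring
  have hF : Summable F := by
    rw [summable_prod_of_nonneg (fun p => by by_cases hp : p.2 ≤ p.1 <;> simp [hFdef, hp, norm_nonneg])]
    constructor
    · intro m
      exact summable_of_ne_finset_zero (hfiber_supp m)
    · apply ha.congr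
      intro m
      rw [hfiber_sum m]
  have hs : Summable fun k => ‖x k‖ * ‖y k‖ := by
    have hF' : Summable fun p => ‖X p‖ * ‖Y p‖ := hF.congr fun p => (hXY p).symm
    exact (Equiv.summable_iff e).2 hF'
  have hrep : ∀ i j, h i j = ∑' k, (x k : ℕ → ℂ) i * (starRingEnd ℂ) ((y k : ℕ → ℂ) j) := by
    intro i j
    have h1 : ∑' k, (x k : ℕ → ℂ) i * (starRingEnd ℂ) ((y k : ℕ → ℂ) j)
        = ∑' p : ℕ × ℕ, (X p : ℕ → ℂ) i * (starRingEnd ℂ) ((Y p : ℕ → ℂ) j) :=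
      Equiv.tsum_eq e (fun p => (X p : ℕ → ℂ) i * (starRingEnd ℂ) ((Y p : ℕ → ℂ) j))
    rw [h1, tsum_eq_single ((i + j, i) : ℕ × ℕ) ?_]
    · have hle : i ≤ i + j := Nat.le_add_right i j
      simp only [hX, hY]
      rw [if_pos hle, if_pos hle, lp.coeFn_smul]
      simp only [Pi.smul_apply, lp.single_apply_self, smul_eq_mul, mul_one]
      rw [Nat.add_sub_cancel_left, lp.single_apply_self]
      simp [hha i j]
    · rintro ⟨m, i'⟩ hp
      by_cases hle : i' ≤ m
      · simp only [hX, hY]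
        rw [if_pos hle, if_pos hle]
        by_cases h2 : i' = i
        · subst h2
          have hj : j ≠ m - i' := by
            intro hc
            apply hp
            have : m = i' + j := by omega
            simp [this, Nat.add_comm]
          rw [lp.single_apply_ne 2 _ _ hj]
          simp
        · rw [lp.coeFn_smul]
          simp only [Pi.smul_apply]
          rw [lp.single_apply_ne 2 _ _ (Ne.symm h2)]
          simp
      · simp only [hX]
        rw [if_neg hle]
        simp [lp.coeFn_zero]
  refine ⟨⟨x, y, hs, hrep⟩, ?_⟩
  refine (traceNorm_le h x y hs hrep).trans (le_of_eq ?_)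
  have h2 : ∑' k, ‖x k‖ * ‖y k‖ = ∑' p : ℕ × ℕ, ‖X p‖ * ‖Y p‖ :=
    Equiv.tsum_eq e (fun p => ‖X p‖ * ‖Y p‖)
  rw [h2, tsum_congr hXY, Summable.tsum_prod hF]
  exact tsum_congr hfiber_sum

lemma geom_vec (r : ℝ) (hr0 : 0 < r) (hr1 : r < 1) (c : ℝ) (hc : 0 ≤ c) :
    ∃ u : ell2, (∀ i : ℕ, (u : ℕ → ℂ) i = (Real.sqrt c : ℂ) * (r : ℂ) ^ i) ∧
      ‖u‖ * ‖u‖ = c * (1 - r ^ 2)⁻¹ := by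
  have hr2 : r ^ 2 < 1 := by nlinarith
  have hr2' : (0:ℝ) ≤ r ^ 2 := sq_nonneg r
  have h2r : (2 : ℝ≥0∞).toReal = 2 := by norm_num
  have hnorm : ∀ i : ℕ, ‖(Real.sqrt c : ℂ) * (r : ℂ) ^ i‖ = Real.sqrt c * r ^ i := by
    intro i
    rw [norm_mul, Complex.norm_real, norm_pow, Complex.norm_real, Real.norm_eq_abs,
      Real.norm_eq_abs, abs_of_nonneg (Real.sqrt_nonneg c), abs_of_nonneg hr0.le]
  have hsq : ∀ i : ℕ, (Real.sqrt c * r ^ i) ^ 2 = c * (r ^ 2) ^ i := by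
    intro i
    rw [mul_pow, Real.sq_sqrt hc, ← pow_mul, ← pow_mul, Nat.mul_comm]
  have hsummable : Summable (fun i : ℕ => ‖(Real.sqrt c : ℂ) * (r : ℂ) ^ i‖ ^ (2 : ℝ≥0∞).toReal) := by
    rw [h2r]
    refine ((summable_geometric_of_lt_one hr2' hr2).mul_left c).congr fun i => ?_
    rw [Real.rpow_two, hnorm i, hsq i]
  refine ⟨⟨fun i : ℕ => (Real.sqrt c : ℂ) * (r : ℂ) ^ i, memℓp_gen hsummable⟩, fun i => rfl, ?_⟩
  set u : ell2 := (⟨fun i : ℕ => (Real.sqrt c : ℂ) * (r : ℂ) ^ i, memℓp_gen hsummable⟩ : ell2) with hu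
  have hnorm2 := lp.norm_rpow_eq_tsum (p := 2) (by norm_num) u
  rw [h2r] at hnorm2
  have hval : ∑' i : ℕ, ‖(u : ℕ → ℂ) i‖ ^ (2:ℝ) = c * (1 - r ^ 2)⁻¹ := by
    have : ∀ i : ℕ, ‖(u : ℕ → ℂ) i‖ ^ (2:ℝ) = c * (r ^ 2) ^ i := by
      intro i
      rw [Real.rpow_two]
      show ‖(Real.sqrt c : ℂ) * (r : ℂ) ^ i‖ ^ 2 = _
      rw [hnorm i, hsq i]
    rw [tsum_congr this, tsum_mul_left, tsum_geometric_of_lt_one hr2' hr2]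
  calc ‖u‖ * ‖u‖ = ‖u‖ ^ (2:ℝ) := by rw [Real.rpow_two]; ring
    _ = c * (1 - r ^ 2)⁻¹ := by rw [hnorm2, hval]

lemma geom_hankel (r : ℝ) (hr0 : 0 < r) (hr1 : r < 1) (c : ℝ) (hc : 0 ≤ c) (g : ℕ → ℕ → ℂ)
    (hg : ∀ i j, g i j = ((c : ℝ) : ℂ) * (r : ℂ) ^ (i + j)) :
    IsTraceClass g ∧ traceNorm g = c * (1 - r ^ 2)⁻¹ := by
  have hr2 : r ^ 2 < 1 := by nlinarith
  have hr2' : (0:ℝ) ≤ r ^ 2 := sq_nonneg r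
  obtain ⟨u, hu, hnu⟩ := geom_vec r hr0 hr1 c hc
  have hsq : ((Real.sqrt c : ℝ) : ℂ) * ((Real.sqrt c : ℝ) : ℂ) = ((c : ℝ) : ℂ) := by
    rw [← Complex.ofReal_mul, Real.mul_self_sqrt hc]
  have huv : ∀ i j, g i j = (u : ℕ → ℂ) i * (starRingEnd ℂ) ((u : ℕ → ℂ) j) := by
    intro i j
    rw [hg, hu, hu]
    have h1 : (starRingEnd ℂ) ((Real.sqrt c : ℂ) * (r : ℂ) ^ j)
        = (Real.sqrt c : ℂ) * (r : ℂ) ^ j := by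
      rw [map_mul, Complex.conj_ofReal, ← Complex.ofReal_pow, Complex.conj_ofReal,
        Complex.ofReal_pow]
    rw [h1]
    have h2 : (Real.sqrt c : ℂ) * (r:ℂ) ^ i * ((Real.sqrt c : ℂ) * (r:ℂ) ^ j)
        = ((Real.sqrt c : ℂ) * (Real.sqrt c : ℂ)) * (r:ℂ) ^ (i + j) := by
      rw [pow_add]; ring
    rw [h2, hsq]
  have htc := rankOne_rep g u u huv
  have hupper : traceNorm g ≤ c * (1 - r ^ 2)⁻¹ := htc.2.trans_eq hnu
  have hd : ∀ i : ℕ, g i i = ((c * (r ^ 2) ^ i : ℝ) : ℂ) := by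
    intro i
    rw [hg i i]
    push_cast
    rw [← pow_mul, two_mul]
  have hds : Summable (fun i : ℕ => c * (r ^ 2) ^ i) :=
    (summable_geometric_of_lt_one hr2' hr2).mul_left c
  have hlow := le_traceNorm_diag g htc.1 _ hd hds
  rw [tsum_mul_left, tsum_geometric_of_lt_one hr2' hr2] at hlow
  exact ⟨htc.1, le_antisymm hupper hlow⟩
/-- For `r ∈ (0,1)`: `φ_r(k) = r^k` and its truncations `φ_{r,n}` belong to
`𝒞`, `‖φ_r‖_𝒞 = 1`, `‖φ_r − φ_{r,n}‖_𝒞 ≤ ∑_{k=n+1}^∞ 4k·r^k`, and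
`‖φ_r − φ_{r,n}‖_𝒞 → 0` as `n → ∞`. -/
theorem stmt7 (r : ℝ) (hr0 : 0 < r) (hr1 : r < 1) :
    MemC (fun k : ℕ => ((r : ℂ)) ^ k) ∧
    (∀ n : ℕ, MemC (fun k : ℕ => if k ≤ n then ((r : ℂ)) ^ k else 0)) ∧
    CNorm (fun k : ℕ => ((r : ℂ)) ^ k) = 1 ∧
    (∀ n : ℕ,
      CNorm (fun k : ℕ => ((r : ℂ)) ^ k - (if k ≤ n then ((r : ℂ)) ^ k else 0)) ≤
        ∑' j : ℕ, 4 * ((n + 1 + j : ℕ) : ℝ) * r ^ (n + 1 + j)) ∧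
    Tendsto
      (fun n : ℕ =>
        CNorm (fun k : ℕ => ((r : ℂ)) ^ k - (if k ≤ n then ((r : ℂ)) ^ k else 0)))
      atTop (nhds 0) := by
  have hr' : ‖r‖ < 1 := by rw [Real.norm_eq_abs, abs_of_pos hr0]; exact hr1
  have hr2 : r ^ 2 < 1 := by nlinarith
  have hr2ne : 1 - r ^ 2 ≠ 0 := by nlinarith
  -- trace norms of the Hankel matrices of φ_r
  have hgH : ∀ i j : ℕ, hankelH (fun k : ℕ => ((r:ℂ))^k) i j
      = ((1 - r : ℝ) : ℂ) * (r:ℂ) ^ (i + j) := by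
    intro i j
    simp only [hankelH]
    push_cast
    ring
  have hgK : ∀ i j : ℕ, hankelK (fun k : ℕ => ((r:ℂ))^k) i j
      = ((r * (1 - r) : ℝ) : ℂ) * (r:ℂ) ^ (i + j) := by
    intro i j
    simp only [hankelK]
    push_cast
    ring
  have hH := geom_hankel r hr0 hr1 (1 - r) (by linarith) _ hgH
  have hK := geom_hankel r hr0 hr1 (r * (1 - r)) (by nlinarith) _ hgK
  have hlimφ : limUnder atTop (fun k : ℕ => ((r:ℂ))^k) = 0 := by
    apply Filter.Tendsto.limUnder_eq
    apply tendsto_pow_atTop_nhds_zero_of_norm_lt_one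
    rw [Complex.norm_real]
    exact hr'
  have hcnorm1 : CNorm (fun k : ℕ => ((r : ℂ)) ^ k) = 1 := by
    simp only [CNorm, hH.2, hK.2, hlimφ, norm_zero, add_zero]
    field_simp
    ring
  -- truncations
  have htrunc : ∀ n : ℕ, MemC (fun k : ℕ => if k ≤ n then ((r:ℂ))^k else 0) := by
    intro n
    constructor
    · refine (antidiag_traceClass _
        (fun m => (if m ≤ n then ((r:ℂ))^m else 0) - (if m + 1 ≤ n then ((r:ℂ))^(m+1) else 0))
        (fun i j => rfl) ?_).1
      apply summable_of_ne_finset_zero (s := Finset.range (n+1))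
      intro m hm
      rw [Finset.mem_range] at hm
      have h1 : ¬ (m ≤ n) := by omega
      have h2 : ¬ (m + 1 ≤ n) := by omega
      simp [h1, h2]
    · refine (antidiag_traceClass _
        (fun m => (if m + 1 ≤ n then ((r:ℂ))^(m+1) else 0) - (if m + 2 ≤ n then ((r:ℂ))^(m+2) else 0))
        (fun i j => rfl) ?_).1
      apply summable_of_ne_finset_zero (s := Finset.range (n+1))
      intro m hm
      rw [Finset.mem_range] at hm
      have h1 : ¬ (m + 1 ≤ n) := by omega
      have h2 : ¬ (m + 2 ≤ n) := by omega
      simp [h1, h2]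
  -- summable building blocks
  have hgeom : Summable (fun m : ℕ => r ^ m) := summable_geometric_of_lt_one hr0.le hr1
  have hlin : Summable (fun m : ℕ => (m : ℝ) * r ^ m) :=
    (summable_pow_mul_geometric_of_norm_lt_one 1 hr').congr fun m => by rw [pow_one]
  have hbase : Summable (fun m : ℕ => ((m : ℝ) + 1) * r ^ m) :=
    (hlin.add hgeom).congr fun m => by ring
  -- the key tail bound
  have key : ∀ n : ℕ,
      CNorm (fun k : ℕ => ((r : ℂ)) ^ k - (if k ≤ n then ((r : ℂ)) ^ k else 0)) ≤
        ∑' j : ℕ, 4 * ((n + 1 + j : ℕ) : ℝ) * r ^ (n + 1 + j) := by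
    intro n
    set ψ : ℕ → ℂ := fun k : ℕ => ((r : ℂ)) ^ k - (if k ≤ n then ((r : ℂ)) ^ k else 0) with hψdef
    set a : ℕ → ℂ := fun m => ψ m - ψ (m + 1) with hadef
    have hψ_le : ∀ k, ‖ψ k‖ ≤ r ^ k := by
      intro k
      by_cases hk : k ≤ n
      · simp [hψdef, hk, pow_nonneg hr0.le]
      · simp only [hψdef, if_neg hk, sub_zero]
        rw [← Complex.ofReal_pow, Complex.norm_real, Real.norm_eq_abs,
          abs_of_nonneg (pow_nonneg hr0.le k)]
    have h_am : ∀ m, ‖a m‖ ≤ 2 * r ^ m := by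
      intro m
      refine (norm_sub_le _ _).trans ?_
      have h1 := hψ_le m
      have h2 := hψ_le (m + 1)
      have h3 : r ^ (m + 1) ≤ r ^ m := by
        rw [pow_succ]
        exact mul_le_of_le_one_right (pow_nonneg hr0.le m) hr1.le
      linarith
    have haz : ∀ m, m < n → a m = 0 := by
      intro m hm
      have h1 : m ≤ n := hm.le
      have h2 : m + 1 ≤ n := hm
      simp [hadef, hψdef, h1, h2, hm]
    have han : ‖a n‖ = r ^ (n + 1) := by
      have h2 : ¬ (n + 1 ≤ n) := by omega
      have h0 : a n = -((r : ℂ) ^ (n+1)) := by simp [hadef, hψdef, h2]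
      rw [h0, norm_neg, ← Complex.ofReal_pow, Complex.norm_real, Real.norm_eq_abs,
        abs_of_nonneg (pow_nonneg hr0.le _)]
    have ham : ∀ m, n + 1 ≤ m → ‖a m‖ = (1 - r) * r ^ m := by
      intro m hm
      have h1 : ¬ (m ≤ n) := by omega
      have h2 : ¬ (m + 1 ≤ n) := by omega
      have h0 : a m = (((1 - r) * r ^ m : ℝ) : ℂ) := by
        simp only [hadef, hψdef, if_neg h1, if_neg h2, sub_zero]
        push_cast
        ring
      rw [h0, Complex.norm_real, Real.norm_eq_abs,
        abs_of_nonneg (mul_nonneg (by linarith) (pow_nonneg hr0.le m))]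
    have hA : Summable (fun m : ℕ => ((m : ℝ) + 1) * ‖a m‖) := by
      refine Summable.of_nonneg_of_le (fun m => mul_nonneg (by positivity) (norm_nonneg _))
        (fun m => ?_) (hbase.mul_left 2)
      calc ((m : ℝ) + 1) * ‖a m‖ ≤ ((m : ℝ) + 1) * (2 * r ^ m) :=
            mul_le_mul_of_nonneg_left (h_am m) (by positivity)
        _ = 2 * (((m : ℝ) + 1) * r ^ m) := by ring
    have hq : Summable (fun m : ℕ => (m : ℝ) * ‖a m‖) := by
      refine Summable.of_nonneg_of_le (fun m => mul_nonneg (Nat.cast_nonneg m) (norm_nonneg _))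
        (fun m => ?_) hA
      exact mul_le_mul_of_nonneg_right (by linarith) (norm_nonneg _)
    obtain ⟨htcH, hbH⟩ := antidiag_traceClass (hankelH ψ) a (fun i j => rfl) hA
    have hBa : Summable (fun m : ℕ => ((m : ℝ) + 1) * ‖a (m + 1)‖) := by
      refine ((summable_nat_add_iff 1).2 hq).congr fun m => ?_
      push_cast
      ring
    obtain ⟨htcK, hbK⟩ := antidiag_traceClass (hankelK ψ) (fun m => a (m + 1)) (fun i j => rfl) hBa
    have hlim : limUnder atTop ψ = 0 := by
      apply Filter.Tendsto.limUnder_eq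
      have h0 : Tendsto (fun k : ℕ => (r : ℂ) ^ k) atTop (nhds 0) := by
        apply tendsto_pow_atTop_nhds_zero_of_norm_lt_one
        rw [Complex.norm_real]
        exact hr'
      refine h0.congr' ?_
      filter_upwards [eventually_ge_atTop (n + 1)] with k hk
      have hkn : ¬ (k ≤ n) := by omega
      simp [hψdef, hkn]
    simp only [CNorm, hlim, norm_zero, add_zero]
    -- series manipulations
    have hBq : ∑' m : ℕ, ((m : ℝ) + 1) * ‖a (m + 1)‖ = ∑' m : ℕ, (m : ℝ) * ‖a m‖ := by
      rw [Summable.tsum_eq_zero_add hq]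
      simp only [Nat.cast_zero, zero_mul, zero_add]
      exact (tsum_congr fun m => by push_cast; ring).symm
    have hC : Summable (fun m : ℕ => ((m : ℝ) + 1) * ‖a m‖ + (m : ℝ) * ‖a m‖) := hA.add hq
    have hshift : ∑' m : ℕ, (((m : ℝ) + 1) * ‖a m‖ + (m : ℝ) * ‖a m‖)
        = ∑' j : ℕ, ((((j + n : ℕ) : ℝ) + 1) * ‖a (j + n)‖ + ((j + n : ℕ) : ℝ) * ‖a (j + n)‖) := by
      rw [← Summable.sum_add_tsum_nat_add n hC]
      have hz : ∀ m ∈ Finset.range n, ((m : ℝ) + 1) * ‖a m‖ + (m : ℝ) * ‖a m‖ = 0 := by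
        intro m hm
        rw [Finset.mem_range] at hm
        rw [haz m hm]
        simp
      rw [Finset.sum_congr rfl hz]
      simp
    have hGsum : Summable (fun j : ℕ =>
        (((j + n : ℕ) : ℝ) + 1) * ‖a (j + n)‖ + ((j + n : ℕ) : ℝ) * ‖a (j + n)‖) :=
      (summable_nat_add_iff n).2 hC
    have hsplit : ∑' j : ℕ, ((((j + n : ℕ) : ℝ) + 1) * ‖a (j + n)‖ + ((j + n : ℕ) : ℝ) * ‖a (j + n)‖)
        = (((n : ℝ) + 1) * ‖a n‖ + (n : ℝ) * ‖a n‖)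
          + ∑' j : ℕ, ((((j + 1 + n : ℕ) : ℝ) + 1) * ‖a (j + 1 + n)‖
              + ((j + 1 + n : ℕ) : ℝ) * ‖a (j + 1 + n)‖) := by
      rw [Summable.tsum_eq_zero_add hGsum]
      simp only [Nat.zero_add]
    have hGn : ((n : ℝ) + 1) * ‖a n‖ + (n : ℝ) * ‖a n‖ = (2 * (n : ℝ) + 1) * r ^ (n + 1) := by
      rw [han]; ring
    set s : ℕ → ℝ := fun j : ℕ => 4 * ((n + 1 + j : ℕ) : ℝ) * r ^ (n + 1 + j) with hsdef
    have hs : Summable s := by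
      refine ((summable_nat_add_iff (n + 1)).2 (hlin.mul_left 4)).congr fun j => ?_
      have hidx : j + (n + 1) = n + 1 + j := by omega
      simp only [hsdef, hidx]
      ring
    have hsingle : Summable (fun j : ℕ => if j = 0 then (2 * (n:ℝ) + 1) * r ^ (n + 1) else 0) :=
      summable_of_ne_finset_zero (s := {0}) (fun j hj => if_neg (by simpa using hj))
    have hterm : ∀ j : ℕ,
        (((j + 1 + n : ℕ) : ℝ) + 1) * ‖a (j + 1 + n)‖ + ((j + 1 + n : ℕ) : ℝ) * ‖a (j + 1 + n)‖
          ≤ s j - (if j = 0 then (2 * (n:ℝ) + 1) * r ^ (n + 1) else 0) := by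
      intro j
      rw [ham (j + 1 + n) (by omega)]
      have hidx : n + 1 + j = j + 1 + n := by omega
      have hpw : (0:ℝ) ≤ r ^ (j + 1 + n) := pow_nonneg hr0.le _
      have hpw2 : r ^ (n + 1 + j) = r ^ (j + 1 + n) := by rw [hidx]
      rcases Nat.eq_zero_or_pos j with hj | hj
      · subst hj
        simp only [if_pos rfl, hsdef]
        push_cast
        rw [show n + 1 + 0 = 0 + 1 + n from by omega]
        push_cast
        nlinarith [mul_nonneg (mul_nonneg (by positivity : (0:ℝ) ≤ 2*(n:ℝ)+3) hr0.le)
          (pow_nonneg hr0.le (0 + 1 + n))]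
      · rw [if_neg (by omega)]
        simp only [hsdef, hpw2]
        push_cast
        nlinarith [mul_nonneg (mul_nonneg (by positivity : (0:ℝ) ≤ 2*((j:ℝ)+1+(n:ℝ))+1) hr0.le)
          (pow_nonneg hr0.le (j + 1 + n)),
          mul_nonneg (by positivity : (0:ℝ) ≤ 2*(n:ℝ)+2*(j:ℝ)+1) (pow_nonneg hr0.le (j + 1 + n))]
    have hsum_shift : Summable (fun j : ℕ =>
        (((j + 1 + n : ℕ) : ℝ) + 1) * ‖a (j + 1 + n)‖ + ((j + 1 + n : ℕ) : ℝ) * ‖a (j + 1 + n)‖) :=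
      (summable_nat_add_iff 1).2 hGsum
    have hu : Summable (fun j : ℕ => s j - (if j = 0 then (2*(n:ℝ)+1) * r^(n+1) else 0)) :=
      hs.sub hsingle
    have hmain := Summable.tsum_le_tsum hterm hsum_shift hu
    have husum : ∑' j : ℕ, (s j - (if j = 0 then (2*(n:ℝ)+1) * r^(n+1) else 0))
        = (∑' j, s j) - (2*(n:ℝ)+1) * r^(n+1) := by
      rw [Summable.tsum_sub hs hsingle, tsum_ite_eq]
    calc traceNorm (hankelH ψ) + traceNorm (hankelK ψ)
        ≤ (∑' m : ℕ, ((m : ℝ) + 1) * ‖a m‖) + ∑' m : ℕ, ((m : ℝ) + 1) * ‖a (m + 1)‖ :=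
          add_le_add hbH hbK
      _ = (∑' m : ℕ, ((m : ℝ) + 1) * ‖a m‖) + ∑' m : ℕ, (m : ℝ) * ‖a m‖ := by rw [hBq]
      _ = ∑' m : ℕ, (((m : ℝ) + 1) * ‖a m‖ + (m : ℝ) * ‖a m‖) := (Summable.tsum_add hA hq).symm
      _ = ∑' j : ℕ, ((((j + n : ℕ) : ℝ) + 1) * ‖a (j + n)‖ + ((j + n : ℕ) : ℝ) * ‖a (j + n)‖) :=
          hshift
      _ = (((n : ℝ) + 1) * ‖a n‖ + (n : ℝ) * ‖a n‖)
          + ∑' j : ℕ, ((((j + 1 + n : ℕ) : ℝ) + 1) * ‖a (j + 1 + n)‖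
              + ((j + 1 + n : ℕ) : ℝ) * ‖a (j + 1 + n)‖) := hsplit
      _ ≤ (2 * (n : ℝ) + 1) * r ^ (n + 1) + ((∑' j, s j) - (2*(n:ℝ)+1) * r^(n+1)) := by
          rw [hGn]
          exact add_le_add_right (hmain.trans_eq husum) _
      _ = ∑' j, s j := by ring
  refine ⟨⟨hH.1, hK.1⟩, htrunc, hcnorm1, key, ?_⟩
  -- final limit
  have hCN_nonneg : ∀ n : ℕ,
      0 ≤ CNorm (fun k : ℕ => ((r:ℂ))^k - (if k ≤ n then ((r:ℂ))^k else 0)) := fun n =>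
    add_nonneg (add_nonneg (traceNorm_nonneg _) (traceNorm_nonneg _)) (norm_nonneg _)
  have htail : Tendsto (fun n : ℕ => ∑' j : ℕ, 4 * ((n + 1 + j : ℕ) : ℝ) * r ^ (n + 1 + j))
      atTop (nhds 0) := by
    have h1 : Tendsto (fun i : ℕ => ∑' k : ℕ, 4 * ((k + i : ℕ) : ℝ) * r ^ (k + i))
        atTop (nhds 0) := tendsto_sum_nat_add (fun k : ℕ => 4 * (k : ℝ) * r ^ k)
    have h2 : Tendsto (fun n : ℕ => ∑' k : ℕ, 4 * ((k + (n + 1) : ℕ) : ℝ) * r ^ (k + (n + 1)))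
        atTop (nhds 0) := h1.comp (tendsto_add_atTop_nat 1)
    refine h2.congr fun n => tsum_congr fun k => ?_
    rw [show k + (n + 1) = n + 1 + k from by omega]
  exact squeeze_zero hCN_nonneg key htail
end
end

section
/- Let φ : ℕ → ℂ belong to the class 𝒞, i.e. the Hankel matrices h_φ(i,j) = φ(i+j) − φ(i+j+1) and k_φ(i,j) = φ(i+j+1) − φ(i+j+2) are of trace class. Then ∑_{n=0}^∞ |φ(n) − φ(n+1)| ≤ ‖h_φ‖₁ + ‖k_φ‖₁ < ∞; in particular the limit lim_{n→∞} φ(n) exists. -/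
open MeasureTheory Filter
open scoped ENNReal NNReal

noncomputable section

lemma conj22 : Real.HolderConjugate ((2:ℝ≥0∞).toReal) ((2:ℝ≥0∞).toReal) := by
  constructor <;> norm_num

lemma diag_le (h : ℕ → ℕ → ℂ) (x y : ℕ → ell2)
    (hs : Summable fun k => ‖x k‖ * ‖y k‖)
    (hrep : ∀ i j, h i j = ∑' k, (x k : ℕ → ℂ) i * (starRingEnd ℂ) ((y k : ℕ → ℂ) j)) :
    (Summable fun m => ‖h m m‖) ∧ ∑' m, ‖h m m‖ ≤ ∑' k, ‖x k‖ * ‖y k‖ := by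
  set F : ℕ → ℕ → ℝ := fun k m => ‖(x k : ℕ → ℂ) m‖ * ‖(y k : ℕ → ℂ) m‖ with hFdef
  have hF0 : ∀ k m, 0 ≤ F k m := fun k m => mul_nonneg (norm_nonneg _) (norm_nonneg _)
  have hFk : ∀ k, (Summable fun m => F k m) ∧ ∑' m, F k m ≤ ‖x k‖ * ‖y k‖ :=
    fun k => lp.tsum_mul_le_mul_norm conj22 (x k) (y k)
  have hsum2 : Summable fun k => ∑' m, F k m :=
    hs.of_nonneg_of_le (fun k => tsum_nonneg fun m => hF0 _ _) (fun k => (hFk k).2)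
  have hF : Summable (Function.uncurry F) :=
    (summable_prod_of_nonneg fun p => hF0 p.1 p.2).2 ⟨fun k => (hFk k).1, hsum2⟩
  have hcol : ∀ m, Summable fun k => F k m := fun m => hF.prod_symm.prod_factor m
  have hdiag : ∀ m, ‖h m m‖ ≤ ∑' k, F k m := by
    intro m
    rw [hrep m m]
    refine (norm_tsum_le_tsum_norm ?_).trans_eq ?_
    · exact (hcol m).congr fun k => by simp [F, norm_mul]
    · exact tsum_congr fun k => by simp [F, norm_mul]
  have hrow : Summable fun m => ∑' k, F k m := by
    have := (summable_prod_of_nonneg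
      (f := fun p : ℕ × ℕ => Function.uncurry F p.swap) fun p => hF0 p.2 p.1).1
      hF.prod_symm
    exact this.2
  have hsummable : Summable fun m => ‖h m m‖ :=
    hrow.of_nonneg_of_le (fun m => norm_nonneg _) hdiag
  refine ⟨hsummable, ?_⟩
  calc ∑' m, ‖h m m‖ ≤ ∑' m, ∑' k, F k m := Summable.tsum_le_tsum hdiag hsummable hrow
    _ = ∑' k, ∑' m, F k m := Summable.tsum_comm' hF (fun k => (hFk k).1) hcol
    _ ≤ ∑' k, ‖x k‖ * ‖y k‖ := Summable.tsum_le_tsum (fun k => (hFk k).2) hsum2 hs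

lemma diag_summable (h : ℕ → ℕ → ℂ) (hTC : IsTraceClass h) :
    Summable fun m => ‖h m m‖ := by
  obtain ⟨x, y, hs, hrep⟩ := hTC
  exact (diag_le h x y hs hrep).1

lemma diag_le_traceNorm (h : ℕ → ℕ → ℂ) (hTC : IsTraceClass h) :
    ∑' m, ‖h m m‖ ≤ traceNorm h := by
  obtain ⟨x, y, hs, hrep⟩ := hTC
  refine le_csInf ⟨∑' k, ‖x k‖ * ‖y k‖, x, y, hs, hrep, rfl⟩ ?_
  rintro c ⟨x', y', hs', hrep', rfl⟩
  exact (diag_le h x' y' hs' hrep').2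

/-- If both Hankel matrices `h_φ` and `k_φ` are of trace class, then
`∑ |φ(n) − φ(n+1)| ≤ ‖h_φ‖₁ + ‖k_φ‖₁ < ∞`; in particular `lim φ(n)` exists. -/
theorem stmt9 (φ : ℕ → ℂ)
    (hh : IsTraceClass (fun i j => φ (i+j) - φ (i+j+1)))
    (hk : IsTraceClass (fun i j => φ (i+j+1) - φ (i+j+2))) :
    (Summable fun n : ℕ => ‖φ n - φ (n+1)‖) ∧
    (∑' n : ℕ, ‖φ n - φ (n+1)‖) ≤
      traceNorm (fun i j => φ (i+j) - φ (i+j+1)) +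
        traceNorm (fun i j => φ (i+j+1) - φ (i+j+2)) ∧
    ∃ c : ℂ, Filter.Tendsto φ Filter.atTop (nhds c) := by
  set f : ℕ → ℝ := fun n => ‖φ n - φ (n+1)‖ with hf
  have he : Summable fun m => f (2*m) := by
    have := diag_summable _ hh
    refine this.congr fun m => ?_
    simp only [f]
    ring_nf
  have ho : Summable fun m => f (2*m+1) := by
    have := diag_summable _ hk
    refine this.congr fun m => ?_
    simp only [f]
    ring_nf
  have hsum : Summable f := he.even_add_odd ho
  have heq : (∑' m, f (2*m)) + ∑' m, f (2*m+1) = ∑' n, f n := tsum_even_add_odd he ho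
  have hle : (∑' n, f n) ≤
      traceNorm (fun i j => φ (i+j) - φ (i+j+1)) +
        traceNorm (fun i j => φ (i+j+1) - φ (i+j+2)) := by
    rw [← heq]
    refine add_le_add ?_ ?_
    · refine le_trans (le_of_eq ?_) (diag_le_traceNorm _ hh)
      refine tsum_congr fun m => ?_
      simp only [f]; congr 2 <;> ring
    · refine le_trans (le_of_eq ?_) (diag_le_traceNorm _ hk)
      refine tsum_congr fun m => ?_
      simp only [f]; congr 2 <;> ring
  refine ⟨hsum, hle, ?_⟩
  have hS : Summable fun n => φ n - φ (n+1) := hsum.of_norm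
  obtain ⟨S, hS⟩ := hS
  refine ⟨φ 0 - S, ?_⟩
  have h1 : Tendsto (fun n => φ 0 - ∑ i ∈ Finset.range n, (φ i - φ (i+1)))
      atTop (nhds (φ 0 - S)) := tendsto_const_nhds.sub hS.tendsto_sum_nat
  refine h1.congr fun n => ?_
  rw [Finset.sum_range_sub' φ n]
  ring

end
end

section
/- Let φ : ℕ → ℂ and define its even extension φ̃ : ℕ → ℂ by φ̃(2n) = φ(n) and φ̃(2n+1) = 0 for all n ∈ ℕ. Then φ belongs to the class 𝒞 if and only if φ̃ belongs to the class 𝒞′, and in that case ‖φ̃‖_{𝒞′} = ‖φ‖_𝒞. -/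
open MeasureTheory Filter
open scoped ENNReal

noncomputable section

/-- The Hankel matrix `ĥ_φ(i,j) = φ(i+j) − φ(i+j+2)`. -/
def hankelHat (φ : ℕ → ℂ) : ℕ → ℕ → ℂ := fun i j => φ (i+j) - φ (i+j+2)

/-- The class `𝒞′`: the Hankel matrix `ĥ_φ` is of trace class. -/
def MemCp (φ : ℕ → ℂ) : Prop := IsTraceClass (hankelHat φ)

/-- For `φ ∈ 𝒞′`, the constant `c₁` in the decomposition `φ(n) = c₁ + (−1)ⁿ c₂ + ψ(n)`,
`ψ(n) → 0`: it equals `(lim φ(2n) + lim φ(2n+1))/2`. -/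
def cOne (φ : ℕ → ℂ) : ℂ :=
  (limUnder atTop (fun n => φ (2*n)) + limUnder atTop (fun n => φ (2*n+1))) / 2

/-- For `φ ∈ 𝒞′`, the constant `c₂` in the decomposition `φ(n) = c₁ + (−1)ⁿ c₂ + ψ(n)`,
`ψ(n) → 0`: it equals `(lim φ(2n) − lim φ(2n+1))/2`. -/
def cTwo (φ : ℕ → ℂ) : ℂ :=
  (limUnder atTop (fun n => φ (2*n)) - limUnder atTop (fun n => φ (2*n+1))) / 2

/-- The norm `‖φ‖_{𝒞′} = |c₁| + |c₂| + ‖ĥ_φ‖₁`. -/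
def CpNorm (φ : ℕ → ℂ) : ℝ := ‖cOne φ‖ + ‖cTwo φ‖ + traceNorm (hankelHat φ)

open scoped ENNReal in
lemma toReal2 : (2:ℝ≥0∞).toReal = 2 := by simp

lemma sumsq (x : ell2) : Summable fun i => ‖(x : ℕ → ℂ) i‖ ^ (2:ℝ) := by
  have := (lp.memℓp x).summable (p := 2) (by rw [toReal2]; norm_num)
  rwa [toReal2] at this

/-- even extension: (evExt x)(2n) = x n, odd ↦ 0 -/
def evF (x : ell2) : ℕ → ℂ := fun i => if Even i then (x : ℕ → ℂ) (i/2) else 0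

lemma evF_even (x : ell2) (n : ℕ) : evF x (2*n) = (x : ℕ → ℂ) n := by
  simp [evF, Nat.mul_div_cancel_left n (by norm_num : 0 < 2)]

lemma evF_odd (x : ell2) (n : ℕ) : evF x (2*n+1) = 0 := by
  simp [evF, Nat.even_add_one, Nat.even_mul]

def odF (x : ell2) : ℕ → ℂ := fun i => if ¬ Even i then (x : ℕ → ℂ) (i/2) else 0

lemma odF_even (x : ell2) (n : ℕ) : odF x (2*n) = 0 := by
  simp [odF, Nat.even_mul]

lemma odF_odd (x : ell2) (n : ℕ) : odF x (2*n+1) = (x : ℕ → ℂ) n := by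
  have : (2*n+1)/2 = n := by omega
  simp [odF, Nat.even_add_one, Nat.even_mul, this]

lemma evF_mem (x : ell2) : Memℓp (evF x) 2 := by
  apply memℓp_gen
  rw [toReal2]
  apply Summable.even_add_odd
  · simpa [evF_even] using sumsq x
  · simp [evF_odd]

lemma odF_mem (x : ell2) : Memℓp (odF x) 2 := by
  apply memℓp_gen
  rw [toReal2]
  apply Summable.even_add_odd
  · simp [odF_even]
  · simpa [odF_odd] using sumsq x

def evE (x : ell2) : ell2 := ⟨evF x, evF_mem x⟩
def odE (x : ell2) : ell2 := ⟨odF x, odF_mem x⟩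

lemma rpow2_inj {a b : ℝ} (ha : 0 ≤ a) (hb : 0 ≤ b) (h : a ^ (2:ℝ) = b ^ (2:ℝ)) : a = b := by
  rw [show (2:ℝ) = ((2:ℕ):ℝ) by norm_num, Real.rpow_natCast, Real.rpow_natCast] at h
  nlinarith

lemma norm_rpow2 (x : ell2) : ‖x‖ ^ (2:ℝ) = ∑' i, ‖(x : ℕ → ℂ) i‖ ^ (2:ℝ) := by
  have := lp.norm_rpow_eq_tsum (p := 2) (by rw [toReal2]; norm_num) x
  rwa [toReal2] at this

lemma evE_norm (x : ell2) : ‖evE x‖ = ‖x‖ := by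
  apply rpow2_inj (norm_nonneg _) (norm_nonneg _)
  rw [norm_rpow2, norm_rpow2]
  rw [← tsum_even_add_odd (by simpa [evE, evF_even] using sumsq x)
    (by simp [evE, evF_odd])]
  simp [evE, evF_even, evF_odd]

lemma odE_norm (x : ell2) : ‖odE x‖ = ‖x‖ := by
  apply rpow2_inj (norm_nonneg _) (norm_nonneg _)
  rw [norm_rpow2, norm_rpow2]
  rw [← tsum_even_add_odd (f := fun i => ‖(odE x : ℕ → ℂ) i‖ ^ (2:ℝ))
    (by simp [odE, odF_even])
    (by simpa [odE, odF_odd] using sumsq x)]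
  simp [odE, odF_even, odF_odd]

/-- restrictions -/
def reE (x : ell2) : ell2 :=
  ⟨fun a => (x : ℕ → ℂ) (2*a), by
    apply memℓp_gen
    rw [toReal2]
    exact (sumsq x).comp_injective (fun a b => by omega)⟩

def roE (x : ell2) : ell2 :=
  ⟨fun a => (x : ℕ → ℂ) (2*a+1), by
    apply memℓp_gen
    rw [toReal2]
    exact (sumsq x).comp_injective (fun a b => by omega)⟩

@[simp] lemma reE_apply (x : ell2) (a : ℕ) : (reE x : ℕ → ℂ) a = (x : ℕ → ℂ) (2*a) := rfl
@[simp] lemma roE_apply (x : ell2) (a : ℕ) : (roE x : ℕ → ℂ) a = (x : ℕ → ℂ) (2*a+1) := rfl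

lemma re_ro_norm (x : ell2) : ‖reE x‖ ^ (2:ℝ) + ‖roE x‖ ^ (2:ℝ) = ‖x‖ ^ (2:ℝ) := by
  rw [norm_rpow2, norm_rpow2, norm_rpow2]
  simp only [reE_apply, roE_apply]
  exact tsum_even_add_odd (f := fun i => ‖(x : ℕ → ℂ) i‖ ^ (2:ℝ))
    ((sumsq x).comp_injective (fun a b => by omega))
    ((sumsq x).comp_injective (fun a b => by omega))

lemma cs_bound (X Y : ell2) :
    ‖reE X‖ * ‖reE Y‖ + ‖roE X‖ * ‖roE Y‖ ≤ ‖X‖ * ‖Y‖ := by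
  have h1 := re_ro_norm X
  have h2 := re_ro_norm Y
  rw [show (2:ℝ) = ((2:ℕ):ℝ) by norm_num] at h1 h2
  simp only [Real.rpow_natCast] at h1 h2
  set a := ‖reE X‖; set b := ‖reE Y‖; set c := ‖roE X‖; set d := ‖roE Y‖
  have a0 : (0:ℝ) ≤ a := norm_nonneg _
  have b0 : (0:ℝ) ≤ b := norm_nonneg _
  have c0 : (0:ℝ) ≤ c := norm_nonneg _
  have d0 : (0:ℝ) ≤ d := norm_nonneg _
  have s0 : (0:ℝ) ≤ a*b + c*d := by positivity
  have key : (a*b + c*d)^2 ≤ (‖X‖*‖Y‖)^2 := by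
    have : (a*b+c*d)^2 ≤ (a^2+c^2)*(b^2+d^2) := by nlinarith [sq_nonneg (a*d - c*b)]
    calc (a*b+c*d)^2 ≤ (a^2+c^2)*(b^2+d^2) := this
      _ = (‖X‖*‖Y‖)^2 := by rw [h1, h2]; ring
  calc a*b + c*d = Real.sqrt ((a*b+c*d)^2) := (Real.sqrt_sq s0).symm
    _ ≤ Real.sqrt ((‖X‖*‖Y‖)^2) := Real.sqrt_le_sqrt key
    _ = ‖X‖*‖Y‖ := Real.sqrt_sq (by positivity)

lemma reE_norm_le (x : ell2) : ‖reE x‖ ≤ ‖x‖ := by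
  have h := re_ro_norm x
  rw [show (2:ℝ) = ((2:ℕ):ℝ) by norm_num] at h
  simp only [Real.rpow_natCast] at h
  nlinarith [norm_nonneg (reE x), norm_nonneg (roE x), norm_nonneg x, sq_nonneg (‖roE x‖)]

lemma roE_norm_le (x : ell2) : ‖roE x‖ ≤ ‖x‖ := by
  have h := re_ro_norm x
  rw [show (2:ℝ) = ((2:ℕ):ℝ) by norm_num] at h
  simp only [Real.rpow_natCast] at h
  nlinarith [norm_nonneg (reE x), norm_nonneg (roE x), norm_nonneg x]

@[simp] lemma evE_apply_even (x : ell2) (n : ℕ) : (evE x : ℕ → ℂ) (2*n) = (x : ℕ → ℂ) n :=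
  evF_even x n
@[simp] lemma evE_apply_odd (x : ell2) (n : ℕ) : (evE x : ℕ → ℂ) (2*n+1) = 0 := evF_odd x n
@[simp] lemma odE_apply_even (x : ell2) (n : ℕ) : (odE x : ℕ → ℂ) (2*n) = 0 := odF_even x n
@[simp] lemma odE_apply_odd (x : ell2) (n : ℕ) : (odE x : ℕ → ℂ) (2*n+1) = (x : ℕ → ℂ) n :=
  odF_odd x n

lemma apply_le_norm (x : ell2) (i : ℕ) : ‖(x : ℕ → ℂ) i‖ ≤ ‖x‖ :=
  lp.norm_apply_le_norm (by norm_num) x i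

/-- summability of entry products from summability of norm products -/
lemma entry_summable {x y : ℕ → ell2} (h : Summable fun k => ‖x k‖ * ‖y k‖) (i j : ℕ) :
    Summable fun k => (x k : ℕ → ℂ) i * (starRingEnd ℂ) ((y k : ℕ → ℂ) j) := by
  apply Summable.of_norm
  apply Summable.of_nonneg_of_le (fun k => norm_nonneg _) _ h
  intro k
  rw [norm_mul, RCLike.norm_conj ((y k : ℕ → ℂ) j)]
  exact mul_le_mul (apply_le_norm _ _) (apply_le_norm _ _) (norm_nonneg _) (norm_nonneg _)

section main
variable {φ φt : ℕ → ℂ}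


variable (heven : ∀ n : ℕ, φt (2 * n) = φ n) (hodd : ∀ n : ℕ, φt (2 * n + 1) = 0)

include heven in
lemma hat_ee (a b : ℕ) : hankelHat φt (2*a) (2*b) = hankelH φ a b := by
  simp only [hankelHat, hankelH]
  rw [show 2*a+2*b = 2*(a+b) from by ring, heven,
    show 2*(a+b)+2 = 2*(a+b+1) from by ring, heven]

include heven in
lemma hat_oo (a b : ℕ) : hankelHat φt (2*a+1) (2*b+1) = hankelK φ a b := by
  simp only [hankelHat, hankelK]
  rw [show 2*a+1+(2*b+1) = 2*(a+b+1) from by ring, heven,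
    show 2*(a+b+1)+2 = 2*(a+b+2) from by ring, heven]

include hodd in
lemma hat_eo (a b : ℕ) : hankelHat φt (2*a) (2*b+1) = 0 := by
  simp only [hankelHat]
  rw [show 2*a+(2*b+1) = 2*(a+b)+1 from by ring, hodd,
    show 2*(a+b)+1+2 = 2*(a+b+1)+1 from by ring, hodd, sub_zero]

include hodd in
lemma hat_oe (a b : ℕ) : hankelHat φt (2*a+1) (2*b) = 0 := by
  simp only [hankelHat]
  rw [show 2*a+1+2*b = 2*(a+b)+1 from by ring, hodd,
    show 2*(a+b)+1+2 = 2*(a+b+1)+1 from by ring, hodd, sub_zero]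

include heven hodd in
lemma fwd (x y u v : ℕ → ell2)
    (hxy : Summable fun k => ‖x k‖ * ‖y k‖) (huv : Summable fun k => ‖u k‖ * ‖v k‖)
    (hH : ∀ i j, hankelH φ i j = ∑' k, (x k : ℕ → ℂ) i * (starRingEnd ℂ) ((y k : ℕ → ℂ) j))
    (hK : ∀ i j, hankelK φ i j = ∑' k, (u k : ℕ → ℂ) i * (starRingEnd ℂ) ((v k : ℕ → ℂ) j)) :
    ∃ X Y : ℕ → ell2,
      (Summable fun k => ‖X k‖ * ‖Y k‖) ∧
      (∀ i j, hankelHat φt i j = ∑' k, (X k : ℕ → ℂ) i * (starRingEnd ℂ) ((Y k : ℕ → ℂ) j)) ∧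
      (∑' k, ‖X k‖ * ‖Y k‖) = (∑' k, ‖x k‖ * ‖y k‖) + ∑' k, ‖u k‖ * ‖v k‖ := by
  set X : ℕ → ell2 := fun m => if Even m then evE (x (m/2)) else odE (u (m/2)) with hX
  set Y : ℕ → ell2 := fun m => if Even m then evE (y (m/2)) else odE (v (m/2)) with hY
  have hXe : ∀ k, X (2*k) = evE (x k) := by
    intro k; simp only [hX]; rw [if_pos (even_two_mul k), show 2*k/2 = k from by omega]
  have hYe : ∀ k, Y (2*k) = evE (y k) := by
    intro k; simp only [hY]; rw [if_pos (even_two_mul k), show 2*k/2 = k from by omega]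
  have hXo : ∀ k, X (2*k+1) = odE (u k) := by
    intro k; simp only [hX]
    rw [if_neg (by simp [Nat.even_add_one, Nat.even_mul]),
      show (2*k+1)/2 = k from by omega]
  have hYo : ∀ k, Y (2*k+1) = odE (v k) := by
    intro k; simp only [hY]
    rw [if_neg (by simp [Nat.even_add_one, Nat.even_mul]),
      show (2*k+1)/2 = k from by omega]
  have hNe : ∀ k, ‖X (2*k)‖ * ‖Y (2*k)‖ = ‖x k‖ * ‖y k‖ := by
    intro k; rw [hXe, hYe, evE_norm, evE_norm]
  have hNo : ∀ k, ‖X (2*k+1)‖ * ‖Y (2*k+1)‖ = ‖u k‖ * ‖v k‖ := by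
    intro k; rw [hXo, hYo, odE_norm, odE_norm]
  have hsum : Summable fun m => ‖X m‖ * ‖Y m‖ := by
    apply Summable.even_add_odd
    · exact (funext hNe : _) ▸ hxy
    · exact (funext hNo : _) ▸ huv
  refine ⟨X, Y, hsum, ?_, ?_⟩
  · intro i j
    have hterm := entry_summable (x := X) (y := Y) hsum i j
    have he := hterm.comp_injective (i := fun k => 2*k) (fun a b h => by dsimp at h; omega)
    have ho := hterm.comp_injective (i := fun k => 2*k+1) (fun a b h => by dsimp at h; omega)
    have hsplit := tsum_even_add_odd
      (f := fun m => (X m : ℕ → ℂ) i * (starRingEnd ℂ) ((Y m : ℕ → ℂ) j)) he ho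
    rw [← hsplit]
    obtain ⟨a, rfl | rfl⟩ := Nat.even_or_odd' i <;> obtain ⟨b, rfl | rfl⟩ := Nat.even_or_odd' j
    · rw [tsum_congr (fun k => by rw [hXe, hYe]; simp :
          ∀ k, (X (2*k) : ℕ → ℂ) (2*a) * (starRingEnd ℂ) ((Y (2*k) : ℕ → ℂ) (2*b))
            = (x k : ℕ → ℂ) a * (starRingEnd ℂ) ((y k : ℕ → ℂ) b)),
        tsum_congr (fun k => by rw [hXo]; simp :
          ∀ k, (X (2*k+1) : ℕ → ℂ) (2*a) * (starRingEnd ℂ) ((Y (2*k+1) : ℕ → ℂ) (2*b)) = 0),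
        tsum_zero, add_zero, hat_ee heven, hH]
    · rw [tsum_congr (fun k => by rw [hYe]; simp :
          ∀ k, (X (2*k) : ℕ → ℂ) (2*a) * (starRingEnd ℂ) ((Y (2*k) : ℕ → ℂ) (2*b+1)) = 0),
        tsum_congr (fun k => by rw [hXo]; simp :
          ∀ k, (X (2*k+1) : ℕ → ℂ) (2*a) * (starRingEnd ℂ) ((Y (2*k+1) : ℕ → ℂ) (2*b+1)) = 0),
        tsum_zero, add_zero, hat_eo hodd]
    · rw [tsum_congr (fun k => by rw [hXe]; simp :
          ∀ k, (X (2*k) : ℕ → ℂ) (2*a+1) * (starRingEnd ℂ) ((Y (2*k) : ℕ → ℂ) (2*b)) = 0),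
        tsum_congr (fun k => by rw [hYo]; simp :
          ∀ k, (X (2*k+1) : ℕ → ℂ) (2*a+1) * (starRingEnd ℂ) ((Y (2*k+1) : ℕ → ℂ) (2*b)) = 0),
        tsum_zero, add_zero, hat_oe hodd]
    · rw [tsum_congr (fun k => by rw [hXe]; simp :
          ∀ k, (X (2*k) : ℕ → ℂ) (2*a+1) * (starRingEnd ℂ) ((Y (2*k) : ℕ → ℂ) (2*b+1)) = 0),
        tsum_congr (fun k => by rw [hXo, hYo]; simp :
          ∀ k, (X (2*k+1) : ℕ → ℂ) (2*a+1) * (starRingEnd ℂ) ((Y (2*k+1) : ℕ → ℂ) (2*b+1))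
            = (u k : ℕ → ℂ) a * (starRingEnd ℂ) ((v k : ℕ → ℂ) b)),
        tsum_zero, zero_add, hat_oo heven, hK]
  · rw [← tsum_even_add_odd (f := fun m => ‖X m‖ * ‖Y m‖)
      ((funext hNe : _) ▸ hxy) ((funext hNo : _) ▸ huv)]
    rw [tsum_congr hNe, tsum_congr hNo]

include heven in
lemma bwd (X Y : ℕ → ell2)
    (hXY : Summable fun k => ‖X k‖ * ‖Y k‖)
    (hrep : ∀ i j, hankelHat φt i j
      = ∑' k, (X k : ℕ → ℂ) i * (starRingEnd ℂ) ((Y k : ℕ → ℂ) j)) :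
    (Summable fun k => ‖reE (X k)‖ * ‖reE (Y k)‖) ∧
    (Summable fun k => ‖roE (X k)‖ * ‖roE (Y k)‖) ∧
    (∀ i j, hankelH φ i j
      = ∑' k, (reE (X k) : ℕ → ℂ) i * (starRingEnd ℂ) ((reE (Y k) : ℕ → ℂ) j)) ∧
    (∀ i j, hankelK φ i j
      = ∑' k, (roE (X k) : ℕ → ℂ) i * (starRingEnd ℂ) ((roE (Y k) : ℕ → ℂ) j)) ∧
    (∑' k, ‖reE (X k)‖ * ‖reE (Y k)‖) + (∑' k, ‖roE (X k)‖ * ‖roE (Y k)‖)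
      ≤ ∑' k, ‖X k‖ * ‖Y k‖ := by
  have hre : Summable fun k => ‖reE (X k)‖ * ‖reE (Y k)‖ := by
    apply Summable.of_nonneg_of_le (fun k => by positivity) _ hXY
    exact fun k => mul_le_mul (reE_norm_le _) (reE_norm_le _) (norm_nonneg _) (norm_nonneg _)
  have hro : Summable fun k => ‖roE (X k)‖ * ‖roE (Y k)‖ := by
    apply Summable.of_nonneg_of_le (fun k => by positivity) _ hXY
    exact fun k => mul_le_mul (roE_norm_le _) (roE_norm_le _) (norm_nonneg _) (norm_nonneg _)
  refine ⟨hre, hro, ?_, ?_, ?_⟩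
  · intro a b
    rw [← hat_ee heven a b, hrep (2*a) (2*b)]
    exact tsum_congr fun k => by simp
  · intro a b
    rw [← hat_oo heven a b, hrep (2*a+1) (2*b+1)]
    exact tsum_congr fun k => by simp
  · rw [← Summable.tsum_add hre hro]
    exact Summable.tsum_le_tsum (fun k => cs_bound (X k) (Y k)) (hre.add hro) hXY

end main

/-- the set of representation sums -/
def repSums (h : ℕ → ℕ → ℂ) : Set ℝ := { c : ℝ | ∃ x y : ℕ → ell2,
    (Summable fun k => ‖x k‖ * ‖y k‖) ∧
    (∀ i j, h i j = ∑' k, (x k : ℕ → ℂ) i * (starRingEnd ℂ) ((y k : ℕ → ℂ) j)) ∧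
    c = ∑' k, ‖x k‖ * ‖y k‖ }

lemma traceNorm_eq (h : ℕ → ℕ → ℂ) : traceNorm h = sInf (repSums h) := rfl

lemma repSums_bdd (h : ℕ → ℕ → ℂ) : BddBelow (repSums h) := by
  refine ⟨0, fun c hc => ?_⟩
  obtain ⟨x, y, hs, -, rfl⟩ := hc
  exact tsum_nonneg fun k => by positivity

lemma repSums_nonempty {h : ℕ → ℕ → ℂ} (hh : IsTraceClass h) : (repSums h).Nonempty := by
  obtain ⟨x, y, hs, hrep⟩ := hh
  exact ⟨_, x, y, hs, hrep, rfl⟩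

/-- For the even extension `φ̃` of `φ` (with `φ̃(2n) = φ(n)`,
`φ̃(2n+1) = 0`): `φ ∈ 𝒞` if and only if `φ̃ ∈ 𝒞′`, and in that case
`‖φ̃‖_{𝒞′} = ‖φ‖_𝒞`. -/
theorem stmt14 (φ : ℕ → ℂ) (φt : ℕ → ℂ)
    (heven : ∀ n : ℕ, φt (2 * n) = φ n)
    (hodd : ∀ n : ℕ, φt (2 * n + 1) = 0) :
    (MemC φ ↔ MemCp φt) ∧ (MemC φ → CpNorm φt = CNorm φ) := by
  have fwd' : ∀ s1 ∈ repSums (hankelH φ), ∀ s2 ∈ repSums (hankelK φ),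
      s1 + s2 ∈ repSums (hankelHat φt) := by
    rintro s1 ⟨x, y, hxy, hH, rfl⟩ s2 ⟨u, v, huv, hK, rfl⟩
    obtain ⟨X, Y, hs, hrep, hval⟩ := fwd heven hodd x y u v hxy huv hH hK
    exact ⟨X, Y, hs, hrep, hval.symm⟩
  have bwd' : ∀ s ∈ repSums (hankelHat φt),
      ∃ s1 ∈ repSums (hankelH φ), ∃ s2 ∈ repSums (hankelK φ), s1 + s2 ≤ s := by
    rintro s ⟨X, Y, hXY, hrep, rfl⟩
    obtain ⟨hre, hro, hH, hK, hle⟩ := bwd heven X Y hXY hrep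
    exact ⟨_, ⟨_, _, hre, hH, rfl⟩, _, ⟨_, _, hro, hK, rfl⟩, hle⟩
  have hiff : MemC φ ↔ MemCp φt := by
    constructor
    · rintro ⟨⟨x, y, hxy, hH⟩, ⟨u, v, huv, hK⟩⟩
      obtain ⟨X, Y, hs, hrep, -⟩ := fwd heven hodd x y u v hxy huv hH hK
      exact ⟨X, Y, hs, hrep⟩
    · rintro ⟨X, Y, hXY, hrep⟩
      obtain ⟨hre, hro, hH, hK, -⟩ := bwd heven X Y hXY hrep
      exact ⟨⟨_, _, hre, hH⟩, ⟨_, _, hro, hK⟩⟩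
  refine ⟨hiff, fun hC => ?_⟩
  have neH : (repSums (hankelH φ)).Nonempty := repSums_nonempty hC.1
  have neK : (repSums (hankelK φ)).Nonempty := repSums_nonempty hC.2
  have neHat : (repSums (hankelHat φt)).Nonempty := by
    obtain ⟨s1, h1⟩ := neH; obtain ⟨s2, h2⟩ := neK
    exact ⟨s1 + s2, fwd' s1 h1 s2 h2⟩
  have htn : traceNorm (hankelHat φt) = traceNorm (hankelH φ) + traceNorm (hankelK φ) := by
    rw [traceNorm_eq, traceNorm_eq, traceNorm_eq]
    apply le_antisymm
    · rw [← sub_le_iff_le_add']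
      apply le_csInf neK
      intro s2 h2
      rw [sub_le_iff_le_add', ← sub_le_iff_le_add]
      apply le_csInf neH
      intro s1 h1
      rw [sub_le_iff_le_add]
      exact (csInf_le (repSums_bdd _) (fwd' s1 h1 s2 h2)).trans (by linarith)
    · apply le_csInf neHat
      intro s hs
      obtain ⟨s1, h1, s2, h2, hle⟩ := bwd' s hs
      exact le_trans (add_le_add (csInf_le (repSums_bdd _) h1) (csInf_le (repSums_bdd _) h2)) hle
  have hconst : ‖cOne φt‖ + ‖cTwo φt‖ = ‖limUnder atTop φ‖ := by
    have h1 : (fun n => φt (2*n)) = φ := funext heven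
    have h2 : limUnder atTop (fun n => φt (2*n+1)) = 0 := by
      rw [show (fun n => φt (2*n+1)) = fun _ => (0:ℂ) from funext hodd]
      exact Filter.Tendsto.limUnder_eq tendsto_const_nhds
    set L := limUnder atTop φ
    have hc1 : cOne φt = L / 2 := by rw [cOne, h1, h2, add_zero]
    have hc2 : cTwo φt = L / 2 := by rw [cTwo, h1, h2, sub_zero]
    have h2n : ‖(2:ℂ)‖ = 2 := by norm_num
    rw [hc1, hc2, norm_div, h2n]; ring
  rw [CpNorm, CNorm, htn, hconst]; ring


end
end
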